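/- arXiv:2208.04175 — 4 statements merged into one kernel-verified Lean document; each statement's English description precedes it below -/
import Mathlib

section
/- Let w be a word with m letters 𝗇 and n letters 𝖾. Call a factor w' of w critical if w' has the form 𝗇^i𝖾 or 𝗇𝖾^i with i ≥ 2, the run of i repeated letters in w' is maximal (it cannot be extended by the same letter within w), and the lattice path of w shares at least one unit step (same step at the same location) with the lattice path of the staircase monomial δ_{m_w} among the steps corresponding to the letters of w'. Then w possesses no critical factor if and only if w = 𝖾^a(𝗇𝖾)^b𝗇^c for some nonnegative integers a, b, c (that is, w is a staircase monomial). -/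
noncomputable section

/-- The base field `F = ℂ(q)`. -/
abbrev F : Type := RatFunc ℂ

/-- The indeterminate `q`. -/
def qq : F := RatFunc.X

/-- The `q`-integer `[j]_q = 1 + q + ⋯ + q^(j-1)`. -/
def qint (j : ℕ) : F := ∑ i ∈ Finset.range j, qq ^ i

/-- The `q`-factorial `[j]_q! = [1]_q ⋯ [j]_q`. -/
def qfact (j : ℕ) : F := ∏ i ∈ Finset.range j, qint (i + 1)

/-- Modular relations defining the path algebra `𝒫`; the letter `true` is `𝗇`,
the letter `false` is `𝖾`. -/
inductive PathRel : FreeAlgebra F Bool → FreeAlgebra F Bool → Prop where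
  | mod1 : PathRel
      ((1 + qq) • (FreeAlgebra.ι F false * FreeAlgebra.ι F true * FreeAlgebra.ι F false))
      (qq • (FreeAlgebra.ι F false * FreeAlgebra.ι F false * FreeAlgebra.ι F true) +
        FreeAlgebra.ι F true * FreeAlgebra.ι F false * FreeAlgebra.ι F false)
  | mod2 : PathRel
      ((1 + qq) • (FreeAlgebra.ι F true * FreeAlgebra.ι F false * FreeAlgebra.ι F true))
      (qq • (FreeAlgebra.ι F false * FreeAlgebra.ι F true * FreeAlgebra.ι F true) +
        FreeAlgebra.ι F true * FreeAlgebra.ι F true * FreeAlgebra.ι F false)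

/-- The path algebra `𝒫`. -/
abbrev PathAlg : Type := RingQuot PathRel

/-- The generator `𝗇` of `𝒫`. -/
def Pn : PathAlg := RingQuot.mkAlgHom F PathRel (FreeAlgebra.ι F true)

/-- The generator `𝖾` of `𝒫`. -/
def Pe : PathAlg := RingQuot.mkAlgHom F PathRel (FreeAlgebra.ι F false)

/-- The element of `𝒫` determined by a word in `𝗇` (`true`) and `𝖾` (`false`). -/
def wordElem (w : List Bool) : PathAlg := (w.map fun b => if b then Pn else Pe).prod

/-- `𝒫_{m,n}`: the span of words with `m` letters `𝗇` and `n` letters `𝖾`. -/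
def Pmn (m n : ℕ) : Submodule F PathAlg :=
  Submodule.span F {x | ∃ w : List Bool, w.count true = m ∧ w.count false = n ∧ x = wordElem w}

/-- `lam` (0-indexed list of parts) is a partition contained in the `m × n` box. -/
def IsPartitionIn (m n : ℕ) (lam : ℕ → ℕ) : Prop :=
  (∀ i j, i ≤ j → lam j ≤ lam i) ∧ (∀ i, lam i ≤ n) ∧ (∀ i, m ≤ i → lam i = 0)

/-- `eastBefore w r` = number of east steps (`false`) preceding the `(r+1)`-st
north step (`true`) of `w`. -/
def eastBefore : List Bool → ℕ → ℕ
  | [], _ => 0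
  | true :: _, 0 => 0
  | true :: w, r + 1 => eastBefore w r
  | false :: w, r => eastBefore w r + 1

/-- `northBefore w r` = number of north steps (`true`) preceding the `(r+1)`-st
east step (`false`) of `w`. -/
def northBefore : List Bool → ℕ → ℕ
  | [], _ => 0
  | false :: _, 0 => 0
  | false :: w, r + 1 => northBefore w r
  | true :: w, r => northBefore w r + 1

/-- The partition `λ(w)` of a word with `m` letters `𝗇`, as a 0-indexed function:
row `i` (from the top) of the partition has `eastBefore w (m-1-i)` cells. -/
def wordLam (m : ℕ) (w : List Bool) : ℕ → ℕ :=
  fun i => if i < m then eastBefore w (m - 1 - i) else 0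

/-- The word `w(λ)` of a partition `λ ⊆ m × n` (given as 0-indexed `lam : ℕ → ℕ`). -/
def wordOf (m n : ℕ) (lam : ℕ → ℕ) : List Bool :=
  ((List.range m).flatMap fun k =>
    List.replicate (lam (m - 1 - k) - lam (m - k)) false ++ [true]) ++
    List.replicate (n - lam 0) false

/-- The rook in column `j` of the placement `ρ` lies inside the Ferrers board of `lam`. -/
def rookInside (m n : ℕ) (lam : ℕ → ℕ) (ρ : Fin n ↪ Fin m) (j : Fin n) : Prop :=
  (j : ℕ) < lam (ρ j)

/-- The cell in row `i` (0-indexed from the top) and column `j` (0-indexed from the left)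
is unattacked for the maximal non-attacking rook placement `ρ` (with the Ferrers board of
`lam` drawn in the top-left corner of the `m × n` board). -/
def Unattacked (m n : ℕ) (lam : ℕ → ℕ) (ρ : Fin n ↪ Fin m) (i : Fin m) (j : Fin n) : Prop :=
  ρ j ≠ i ∧ ¬ ((ρ j : ℕ) < (i : ℕ)) ∧
    (if (j : ℕ) < lam i then
      (∀ j' : Fin n, ρ j' = i → ¬ (j' < j)) ∧
      (∀ j' : Fin n, ρ j' = i → j < j' → (j' : ℕ) < lam i)
    else
      ∀ j' : Fin n, ρ j' = i → j' < j → (j' : ℕ) < lam i)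

/-- `stat ρ` = number of unattacked cells. -/
def statRook (m n : ℕ) (lam : ℕ → ℕ) (ρ : Fin n ↪ Fin m) : ℕ :=
  Set.ncard {p : Fin m × Fin n | Unattacked m n lam ρ p.1 p.2}

/-- The `q`-hit number `H_k^{m,n}(λ)`. -/
def qHit (m n : ℕ) (lam : ℕ → ℕ) (k : ℕ) : F :=
  ∑ ρ : Fin n ↪ Fin m,
    if Set.ncard {j : Fin n | rookInside m n lam ρ j} = k then qq ^ statRook m n lam ρ else 0

/-- A Dyck word of size `N`. -/
def IsDyck (N : ℕ) (w : List Bool) : Prop :=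
  w.count true = N ∧ w.count false = N ∧
    ∀ p : ℕ, (w.take p).count false ≤ (w.take p).count true

/-- Adjacency of the Dyck graph `G(D)` of a Dyck word of size `N` on vertices `Fin N`
(0-indexed: vertex `a` is the vertex `a+1` of `{1,…,N}`). -/
def dyckAdj (N : ℕ) (w : List Bool) (a b : Fin N) : Prop :=
  ((a : ℕ) < b ∧ (b : ℕ) < northBefore w a) ∨ ((b : ℕ) < a ∧ (a : ℕ) < northBefore w b)

/-- Proper colorings of the Dyck graph `G(w)` with `ν` colors. -/
def properColorings (N ν : ℕ) (w : List Bool) : Set (Fin N → Fin ν) :=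
  {κ | ∀ a b : Fin N, dyckAdj N w a b → κ a ≠ κ b}

/-- Number of ascents of a coloring. -/
def ascColor (N ν : ℕ) (w : List Bool) (κ : Fin N → Fin ν) : ℕ :=
  Set.ncard {p : Fin N × Fin N | (p.1 : ℕ) < p.2 ∧ dyckAdj N w p.1 p.2 ∧ κ p.1 < κ p.2}

open scoped Classical in
/-- The chromatic quasisymmetric polynomial `X_{G(w)}(x_1,…,x_ν; q)`. -/
def chromX (N ν : ℕ) (w : List Bool) : MvPolynomial (Fin ν) F :=
  ∑ κ : Fin N → Fin ν,
    if κ ∈ properColorings N ν w then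
      MvPolynomial.C (qq ^ ascColor N ν w κ) * ∏ a : Fin N, MvPolynomial.X (κ a)
    else 0

/-- The staircase word `δ_k = 𝖾^{n-k}(𝗇𝖾)^k𝗇^{m-k}`. -/
def deltaWord (m n k : ℕ) : List Bool :=
  List.replicate (n - k) false ++ (List.replicate k [true, false]).flatten ++
    List.replicate (m - k) true

/-- `m_w`: the largest `k` with `λ(w) ⊆ λ(δ_k)`, i.e. such that the path of `δ_k`
lies weakly below the path of `w`. -/
def mw (m n : ℕ) (w : List Bool) : ℕ :=
  Finset.sup ((Finset.range (min m n + 1)).filter fun k =>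
    ∀ i ∈ Finset.range m, wordLam m w i ≤ wordLam m (deltaWord m n k) i) id

/-- The lattice paths of `w` and `d` share the unit step of `w` corresponding to
the letter at (0-indexed) position `p` of `w`. -/
def StepShared (w d : List Bool) (p : ℕ) : Prop :=
  ∃ p' : ℕ, p' < d.length ∧ d[p']? = w[p]? ∧
    (d.take p').count true = (w.take p).count true ∧
    (d.take p').count false = (w.take p).count false

/-- `w` possesses a critical factor: a factor `𝗇^i𝖾` or `𝗇𝖾^i` with `i ≥ 2`, whose run of
repeated letters is maximal within `w`, and whose letters contain a unit step shared by
the lattice paths of `w` and of `δ_{m_w}`. -/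
def HasCriticalFactor (m n : ℕ) (w : List Bool) : Prop :=
  ∃ (x y : List Bool) (i : ℕ), 2 ≤ i ∧
    ((w = x ++ (List.replicate i true ++ [false]) ++ y ∧ x.getLast? ≠ some true ∧
        ∃ p, x.length ≤ p ∧ p < x.length + i + 1 ∧ StepShared w (deltaWord m n (mw m n w)) p) ∨
      (w = x ++ ([true] ++ List.replicate i false) ++ y ∧ y.head? ≠ some false ∧
        ∃ p, x.length ≤ p ∧ p < x.length + i + 1 ∧ StepShared w (deltaWord m n (mw m n w)) p))

/-- Evaluation of a (commutative) polynomial in two variables at the commuting elements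
`s`, `t` of `𝒫`. -/
def evalST (s t : PathAlg) (P : MvPolynomial (Fin 2) F) : PathAlg :=
  ∑ d ∈ P.support, P.coeff d • (s ^ (d 0) * t ^ (d 1))

/-- The conjugate partition: `conjP m lam i = λ'_i = #{rows r : λ_r ≥ i}` (here `i ≥ 1`,
rows 0-indexed, `lam` supported on `[0, m)`). -/
def conjP (m : ℕ) (lam : ℕ → ℕ) (i : ℕ) : ℕ :=
  ((Finset.range m).filter fun r => i ≤ lam r).card

/-- The sequence `b(λ) = (b_1,…,b_n)` (1-indexed `i`) for `λ ⊆ m × n`, `m ≥ n`. -/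
def bSeq (m : ℕ) (lam : ℕ → ℕ) (i : ℕ) : ℤ :=
  if lam (m - i) < i then (m : ℤ) + 1 - i - conjP m lam i else (i : ℤ) - lam (m - i)

/-- The element `wt_i ∈ 𝒫`. -/
def wt (i : ℤ) : PathAlg :=
  if 1 ≤ i then qint i.toNat • (Pn * Pe) - (qq * qint (i - 1).toNat) • (Pe * Pn)
  else (qq ^ i) • (qint (1 - i).toNat • (Pe * Pn) - qint (-i).toNat • (Pn * Pe))

/-- The defining relations of the `q`-Klyachko algebra. -/
def klyRels : Set (MvPolynomial ℤ F) :=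
  {x | ∃ i : ℤ, x = MvPolynomial.C (1 + qq) * (MvPolynomial.X i * MvPolynomial.X i) -
    (MvPolynomial.C qq * (MvPolynomial.X i * MvPolynomial.X (i - 1)) +
      MvPolynomial.X i * MvPolynomial.X (i + 1))}

/-- The `q`-Klyachko algebra `𝒦`. -/
abbrev Kly : Type := MvPolynomial ℤ F ⧸ Ideal.span klyRels

/-- The generator `u_i` of `𝒦`. -/
def uK (i : ℤ) : Kly := Ideal.Quotient.mk (Ideal.span klyRels) (MvPolynomial.X i)

/-- The element `u(λ) = u_{a_1} ⋯ u_{a_m}` of `𝒦`, where `a(λ)` is the area sequence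
of `λ ⊆ m × m` (here `a_{i+1} = (i+1) - λ_{m-i}` with `lam` 0-indexed). -/
def uLam (m : ℕ) (lam : ℕ → ℕ) : Kly :=
  ∏ i ∈ Finset.range m, uK ((i : ℤ) + 1 - lam (m - 1 - i))

/-- The partition `λ(G(D))` of a Dyck word of size `N`, 0-indexed:
`λ_{i+1} = N - h_{i+1}(D)`. -/
def lamG (N : ℕ) (D : List Bool) : ℕ → ℕ :=
  fun i => if i < N then N - northBefore D i else 0

/-- The number of nonzero parts of `λ(G(D))`. -/
def ellG (N : ℕ) (D : List Bool) : ℕ :=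
  ((Finset.range N).filter fun i => N - northBefore D i ≠ 0).card

/-- The Dyck graph `G(D)` is abelian. -/
def IsAbelian (N : ℕ) (D : List Bool) : Prop := lamG N D 0 + ellG N D ≤ N

/-- `r` is an acyclic orientation of the graph with adjacency `adj` on `Fin N`. -/
def IsAcyclicOrientation (N : ℕ) (adj : Fin N → Fin N → Prop)
    (r : Fin N → Fin N → Bool) : Prop :=
  (∀ a b, r a b = true → adj a b) ∧
  (∀ a b, adj a b → (r a b = true ↔ ¬ r b a = true)) ∧
  (∀ a, ¬ Relation.TransGen (fun u v => r u v = true) a a)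

/-- Number of ascents of an orientation. -/
def ascOrient (N : ℕ) (r : Fin N → Fin N → Bool) : ℕ :=
  Set.ncard {p : Fin N × Fin N | r p.1 p.2 = true ∧ (p.1 : ℕ) < p.2}

/-- Remove from `S` the sources of the orientation restricted to `S`. -/
def peel (N : ℕ) (r : Fin N → Fin N → Bool) (S : Set (Fin N)) : Set (Fin N) :=
  {v ∈ S | ∃ u ∈ S, r u v = true}

/-- Number of sources of the orientation restricted to `S`. -/
def numSources (N : ℕ) (r : Fin N → Fin N → Bool) (S : Set (Fin N)) : ℕ :=
  Set.ncard {v ∈ S | ∀ u ∈ S, ¬ r u v = true}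

open scoped Classical in
/-- `initial(A)`: the number of leading entries of the source sequence equal to `2`. -/
def initialA (N : ℕ) (r : Fin N → Fin N → Bool) : ℕ :=
  Finset.sup ((Finset.range (N + 1)).filter fun j =>
    ∀ k < j, numSources N r ((peel N r)^[k] Set.univ) = 2) id

end

namespace Stmt3Aux

/-- block -/
def blk (g : ℕ) : List Bool := true :: List.replicate g false

def tW (l : List ℕ) : List Bool := (l.map blk).flatten

@[simp] lemma tW_nil : tW [] = [] := rfl

lemma tW_cons (g : ℕ) (l : List ℕ) :
    tW (g :: l) = true :: (List.replicate g false ++ tW l) := by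
  simp [tW, blk]

lemma tW_append (u v : List ℕ) : tW (u ++ v) = tW u ++ tW v := by
  simp [tW]

@[simp] lemma count_true_tW (l : List ℕ) : (tW l).count true = l.length := by
  induction l with
  | nil => rfl
  | cons g l ih =>
      simp [tW_cons, List.count_cons, List.count_append, ih, List.count_replicate]

@[simp] lemma count_false_tW (l : List ℕ) : (tW l).count false = l.sum := by
  induction l with
  | nil => rfl
  | cons g l ih =>
      simp [tW_cons, List.count_cons, List.count_append, ih, List.count_replicate]

@[simp] lemma length_tW (l : List ℕ) : (tW l).length = l.length + l.sum := by
  induction l with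
  | nil => rfl
  | cons g l ih => simp [tW_cons, ih]; omega

lemma head?_tW_ne_false (l : List ℕ) : (tW l).head? ≠ some false := by
  cases l with
  | nil => simp
  | cons g l => simp [tW_cons]

lemma exists_rep (w : List Bool) :
    ∃ a0 l, w = List.replicate a0 false ++ tW l ∧ l.length = w.count true ∧
      a0 + l.sum = w.count false := by
  induction w with
  | nil => exact ⟨0, [], by simp, by simp, by simp⟩
  | cons b w ih =>
    obtain ⟨a0, l, hw, hl, ha⟩ := ih
    cases b with
    | false =>
      refine ⟨a0 + 1, l, ?_, ?_, ?_⟩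
      · rw [hw]; simp [List.replicate_succ]
      · simpa using hl
      · simp [List.count_cons]; omega
    | true =>
      refine ⟨0, a0 :: l, ?_, ?_, ?_⟩
      · rw [hw, tW_cons]; simp
      · simp [List.count_cons]; omega
      · simp [List.count_cons]; omega

@[simp] lemma eb_nil (r : ℕ) : eastBefore [] r = 0 := rfl

@[simp] lemma eb_true_zero (w : List Bool) : eastBefore (true :: w) 0 = 0 := rfl

@[simp] lemma eb_true_succ (w : List Bool) (r : ℕ) :
    eastBefore (true :: w) (r + 1) = eastBefore w r := rfl

@[simp] lemma eb_false (w : List Bool) (r : ℕ) :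
    eastBefore (false :: w) r = eastBefore w r + 1 := rfl

lemma eb_rep_false (j : ℕ) (z : List Bool) (r : ℕ) :
    eastBefore (List.replicate j false ++ z) r = j + eastBefore z r := by
  induction j with
  | zero => simp
  | succ j ih => simp [List.replicate_succ, ih]; omega

lemma eb_tW (l : List ℕ) (r : ℕ) : eastBefore (tW l) r = (l.take r).sum := by
  induction l generalizing r with
  | nil => simp
  | cons g l ih =>
    cases r with
    | zero => simp [tW_cons]
    | succ r =>
      rw [tW_cons, eb_true_succ, eb_rep_false, ih]
      simp

lemma eb_word (a0 : ℕ) (l : List ℕ) (r : ℕ) :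
    eastBefore (List.replicate a0 false ++ tW l) r = a0 + (l.take r).sum := by
  rw [eb_rep_false, eb_tW]

lemma eb_le_count (w : List Bool) (r : ℕ) : eastBefore w r ≤ w.count false := by
  induction w generalizing r with
  | nil => simp
  | cons b w ih =>
    cases b with
    | false =>
      have := ih r
      simp [List.count_cons]
      omega
    | true =>
      cases r with
      | zero => simp
      | succ r =>
        have := ih r
        simp [List.count_cons]
        omega

lemma flatten_rep_singleton (c : ℕ) (a : Bool) :
    (List.replicate c [a]).flatten = List.replicate c a := by
  induction c with
  | zero => rfl
  | succ c ih => simp [List.replicate_succ, ih]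

lemma tW_rep_one (k : ℕ) :
    tW (List.replicate k 1) = (List.replicate k [true, false]).flatten := by
  have : blk 1 = [true, false] := rfl
  simp [tW, List.map_replicate, this]

lemma tW_rep_zero (c : ℕ) : tW (List.replicate c 0) = List.replicate c true := by
  have : blk 0 = [true] := rfl
  simp [tW, List.map_replicate, this, flatten_rep_singleton]

lemma delta_eq (m n k : ℕ) :
    deltaWord m n k = List.replicate (n - k) false ++
      tW (List.replicate k 1 ++ List.replicate (m - k) 0) := by
  rw [tW_append, tW_rep_one, tW_rep_zero, deltaWord, List.append_assoc]

lemma sum_take_ones_zeros (k c r : ℕ) :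
    ((List.replicate k 1 ++ List.replicate c 0).take r).sum = min r k := by
  rw [List.take_append, List.sum_append, List.take_replicate, List.take_replicate]
  simp [List.sum_replicate]

lemma eb_delta (m n k r : ℕ) :
    eastBefore (deltaWord m n k) r = (n - k) + min r k := by
  rw [delta_eq, eb_word, sum_take_ones_zeros]

lemma get_mid (x l y : List Bool) (j : ℕ) (hj : j < l.length) :
    (x ++ l ++ y)[x.length + j]? = some (l[j]) := by
  rw [List.append_assoc, List.getElem?_append_right (by omega : x.length ≤ x.length + j)]
  rw [Nat.add_sub_cancel_left]
  rw [List.getElem?_append_left (by omega : j < l.length)]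
  exact List.getElem?_eq_getElem hj

lemma take_mid (x l y : List Bool) (j : ℕ) (hj : j ≤ l.length) :
    (x ++ l ++ y).take (x.length + j) = x ++ l.take j := by
  rw [List.append_assoc, List.take_append,
      List.take_of_length_le (by omega), Nat.add_sub_cancel_left,
      List.take_append_of_le_length hj]

lemma sum_take_mono (l : List ℕ) {r s : ℕ} (h : r ≤ s) : (l.take r).sum ≤ (l.take s).sum := by
  rw [show s = r + (s - r) from by omega, List.take_add, List.sum_append]
  omega

lemma sum_take_le (l : List ℕ) (r : ℕ) : (l.take r).sum ≤ l.sum := by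
  conv_rhs => rw [← List.take_append_drop r l]
  rw [List.sum_append]
  omega

lemma zrun (l : List ℕ) (h : 0 < l.sum) :
    ∃ j g v, l = List.replicate j 0 ++ g :: v ∧ 0 < g := by
  induction l with
  | nil => simp at h
  | cons a l ih =>
    rcases Nat.eq_zero_or_pos a with ha | ha
    · subst ha
      obtain ⟨j, g, v, hl, hg⟩ := ih (by simpa using h)
      exact ⟨j + 1, g, v, by rw [List.replicate_succ, List.cons_append, hl], hg⟩
    · exact ⟨0, a, l, rfl, ha⟩

lemma cond_iff (m n k : ℕ) (w : List Bool) :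
    (∀ i ∈ Finset.range m, wordLam m w i ≤ wordLam m (deltaWord m n k) i) ↔
      (∀ r < m, eastBefore w r ≤ (n - k) + min r k) := by
  constructor
  · intro h r hr
    have h2 := h (m - 1 - r) (Finset.mem_range.mpr (by omega))
    rw [wordLam, wordLam] at h2
    simp only [if_pos (show m - 1 - r < m by omega)] at h2
    rw [show m - 1 - (m - 1 - r) = r from by omega, eb_delta] at h2
    exact h2
  · intro h i hi
    rw [Finset.mem_range] at hi
    rw [wordLam, wordLam]
    simp only [if_pos hi]
    rw [eb_delta]
    exact h (m - 1 - i) (by omega)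

lemma mw_facts (m n : ℕ) (w : List Bool) (he : w.count false = n) :
    mw m n w ≤ min m n ∧
    (∀ r < m, eastBefore w r ≤ (n - mw m n w) + min r (mw m n w)) ∧
    (mw m n w < min m n →
       ∃ r < m, ¬ (eastBefore w r ≤ (n - (mw m n w + 1)) + min r (mw m n w + 1))) := by
  classical
  set s := (Finset.range (min m n + 1)).filter (fun k =>
    ∀ i ∈ Finset.range m, wordLam m w i ≤ wordLam m (deltaWord m n k) i) with hs
  have hmwdef : mw m n w = s.sup id := by rw [mw, hs]
  have h0 : (0 : ℕ) ∈ s := by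
    rw [hs, Finset.mem_filter]
    refine ⟨Finset.mem_range.mpr (by omega), ?_⟩
    rw [cond_iff]
    intro r hr
    have h1 := eb_le_count w r
    rw [he] at h1
    omega
  have hne : s.Nonempty := ⟨0, h0⟩
  have hmem : mw m n w ∈ s := by
    rw [hmwdef, ← Finset.sup'_eq_sup hne id]
    exact s.max'_mem hne
  rw [hs, Finset.mem_filter, Finset.mem_range] at hmem
  obtain ⟨hrange, hcond⟩ := hmem
  refine ⟨by omega, (cond_iff m n _ w).mp hcond, ?_⟩
  intro hlt
  by_contra hc
  push_neg at hc
  have hmemsucc : mw m n w + 1 ∈ s := by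
    rw [hs, Finset.mem_filter]
    refine ⟨Finset.mem_range.mpr (by omega), ?_⟩
    rw [cond_iff]
    intro r hr
    exact hc r hr
  have := Finset.le_sup (f := id) hmemsucc
  rw [← hmwdef] at this
  simp at this

lemma delta_mid (m n k N : ℕ) (hN : N < k) :
    deltaWord m n k = (List.replicate (n - k) false ++ tW (List.replicate N 1)) ++
      [true, false] ++
      tW (List.replicate (k - N - 1) 1 ++ List.replicate (m - k) 0) := by
  rw [delta_eq]
  have hsplit : List.replicate k (1 : ℕ) =
      List.replicate N 1 ++ ([1] ++ List.replicate (k - N - 1) 1) := by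
    rw [show ([1] : List ℕ) = List.replicate 1 1 from rfl, ← List.replicate_add,
        ← List.replicate_add, show N + (1 + (k - N - 1)) = k from by omega]
  rw [hsplit]
  have h1 : tW [1] = [true, false] := rfl
  simp [tW_append, tW_cons, h1, List.append_assoc]

end Stmt3Aux

namespace Stmt3Aux

lemma get_mid' (x l y : List Bool) (j : ℕ) (b : Bool) (hj : j < l.length)
    (hb : l[j] = b) : (x ++ l ++ y)[x.length + j]? = some b := by
  rw [get_mid x l y j hj, hb]

lemma get_mid0 (x l y : List Bool) (b : Bool) (hl : 0 < l.length) (hb : l[0] = b) :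
    (x ++ l ++ y)[x.length]? = some b := by
  have h := get_mid' x l y 0 b hl hb
  rwa [Nat.add_zero] at h

lemma take_mid0 (x l y : List Bool) : (x ++ l ++ y).take x.length = x := by
  rw [List.append_assoc]
  exact List.take_left

lemma crit2 (m n k a0 g : ℕ) (u v : List ℕ) (w : List Bool)
    (hw : w = List.replicate a0 false ++ tW (u ++ g :: v))
    (hmw : mw m n w = k)
    (hg : 2 ≤ g) (hkn : k ≤ n) (hkm : k ≤ m)
    (hsum : a0 + (u ++ g :: v).sum = n)
    (hN : a0 + u.sum + g = n - k + u.length + 1) :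
    HasCriticalFactor m n w := by
  have hsum' : a0 + u.sum + g + v.sum = n := by
    rw [List.sum_append, List.sum_cons] at hsum; omega
  have hulk : u.length + 1 ≤ k := by omega
  obtain ⟨g', rfl⟩ : ∃ g', g = g' + 1 := ⟨g - 1, by omega⟩
  set x : List Bool := List.replicate a0 false ++ tW u with hx
  set y : List Bool := tW v with hy
  have hxw : w = x ++ ([true] ++ List.replicate (g' + 1) false) ++ y := by
    rw [hw, tW_append, tW_cons, hx, hy]
    simp [List.append_assoc]
  have hxct : x.count true = u.length := by simp [hx, List.count_replicate]
  have hxcf : x.count false = a0 + u.sum := by simp [hx, List.count_replicate]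
  refine ⟨x, y, g' + 1, hg, Or.inr ⟨hxw, head?_tW_ne_false v,
    x.length + (g' + 1), by omega, by omega, ?_⟩⟩
  rw [hmw]
  have hdm := delta_mid m n k u.length (by omega)
  set X : List Bool := List.replicate (n - k) false ++ tW (List.replicate u.length 1) with hX
  set Y : List Bool := tW (List.replicate (k - u.length - 1) 1 ++ List.replicate (m - k) 0)
    with hY
  have hXct : X.count true = u.length := by simp [hX, List.count_replicate]
  have hXcf : X.count false = (n - k) + u.length := by
    simp [hX, List.count_replicate, List.sum_replicate]
  have htk : ([true] ++ List.replicate (g' + 1) false).take (g' + 1) =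
      [true] ++ List.replicate g' false := by
    rw [List.take_append]
    simp [List.take_replicate]
  refine ⟨X.length + 1, ?_, ?_, ?_, ?_⟩
  · rw [hdm]
    simp
  · rw [hdm, hxw]
    rw [get_mid' X [true, false] Y 1 false (by norm_num) rfl]
    rw [get_mid' x ([true] ++ List.replicate (g' + 1) false) y (g' + 1) false (by simp)
      (by rw [List.getElem_append_right (by simp)]; simp)]
  · rw [hdm, hxw]
    rw [take_mid X [true, false] Y 1 (by norm_num)]
    rw [take_mid x ([true] ++ List.replicate (g' + 1) false) y (g' + 1) (by simp)]
    rw [htk]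
    simp [List.count_append, hXct, hxct, List.count_replicate]
  · rw [hdm, hxw]
    rw [take_mid X [true, false] Y 1 (by norm_num)]
    rw [take_mid x ([true] ++ List.replicate (g' + 1) false) y (g' + 1) (by simp)]
    rw [htk]
    simp [List.count_append, hXcf, hxcf, List.count_replicate]
    omega

lemma crit1 (m n k a0 j g : ℕ) (u v : List ℕ) (w : List Bool)
    (hw : w = List.replicate a0 false ++ tW (u ++ (List.replicate j 0 ++ g :: v)))
    (hmw : mw m n w = k)
    (hj : 1 ≤ j) (hg : 1 ≤ g) (hkn : k ≤ n) (hkm : k ≤ m)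
    (hulk : u.length < k)
    (hE : a0 + u.sum = n - k + u.length)
    (hlast : u = [] ∨ ∃ u' a', u = u' ++ [a'] ∧ 1 ≤ a') :
    HasCriticalFactor m n w := by
  obtain ⟨g', rfl⟩ : ∃ g', g = g' + 1 := ⟨g - 1, by omega⟩
  set x : List Bool := List.replicate a0 false ++ tW u with hx
  set y : List Bool := List.replicate g' false ++ tW v with hy
  have hxw : w = x ++ (List.replicate (j + 1) true ++ [false]) ++ y := by
    rw [hw, tW_append, tW_append, tW_cons, tW_rep_zero, hx, hy]
    rw [List.replicate_succ' (n := j), List.replicate_succ (n := g')]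
    simp [List.append_assoc]
  have hxct : x.count true = u.length := by simp [hx, List.count_replicate]
  have hxcf : x.count false = a0 + u.sum := by simp [hx, List.count_replicate]
  have hxlast : x.getLast? ≠ some true := by
    rcases hlast with h | ⟨u', a', rfl, ha'⟩
    · subst h
      rw [hx, tW_nil, List.append_nil]
      cases a0 with
      | zero => simp
      | succ a0 =>
        rw [List.replicate_succ', List.getLast?_concat]
        simp
    · obtain ⟨a'', rfl⟩ : ∃ a'', a' = a'' + 1 := ⟨a' - 1, by omega⟩
      have hxeq : x = (List.replicate a0 false ++ (tW u' ++
          (true :: List.replicate a'' false))) ++ [false] := by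
        rw [hx, tW_append, tW_cons, tW_nil, List.append_nil,
          List.replicate_succ' (n := a'')]
        simp [List.append_assoc]
      rw [hxeq, List.getLast?_concat]
      simp
  refine ⟨x, y, j + 1, by omega, Or.inl ⟨hxw, hxlast, x.length, le_refl _, by omega, ?_⟩⟩
  rw [hmw]
  have hdm := delta_mid m n k u.length hulk
  set X : List Bool := List.replicate (n - k) false ++ tW (List.replicate u.length 1) with hX
  set Y : List Bool := tW (List.replicate (k - u.length - 1) 1 ++ List.replicate (m - k) 0)
    with hY
  have hXct : X.count true = u.length := by simp [hX, List.count_replicate]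
  have hXcf : X.count false = (n - k) + u.length := by
    simp [hX, List.count_replicate, List.sum_replicate]
  refine ⟨X.length, ?_, ?_, ?_, ?_⟩
  · rw [hdm]
    simp
  · rw [hdm, hxw]
    rw [get_mid0 X [true, false] Y true (by norm_num) rfl]
    rw [get_mid0 x (List.replicate (j + 1) true ++ [false]) y true (by simp)
      (by rw [List.getElem_append_left (by simp)]; simp)]
  · rw [hdm, hxw]
    rw [take_mid0 X [true, false] Y]
    rw [take_mid0 x (List.replicate (j + 1) true ++ [false]) y]
    rw [hXct, hxct]
  · rw [hdm, hxw]
    rw [take_mid0 X [true, false] Y]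
    rw [take_mid0 x (List.replicate (j + 1) true ++ [false]) y]
    rw [hXcf, hxcf]
    omega

end Stmt3Aux

namespace Stmt3Aux

lemma eb_append_ge (x z : List Bool) (r : ℕ) (h : x.count true ≤ r) :
    eastBefore (x ++ z) r = x.count false + eastBefore z (r - x.count true) := by
  induction x generalizing r with
  | nil => simp
  | cons b x ih =>
    cases b with
    | true =>
      have hct : (true :: x).count true = x.count true + 1 := by
        simp [List.count_cons]
      obtain ⟨r', rfl⟩ : ∃ r', r = r' + 1 := ⟨r - 1, by omega⟩
      rw [List.cons_append, eb_true_succ, ih r' (by omega)]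
      have hcf : (true :: x).count false = x.count false := by
        simp [List.count_cons]
      rw [hcf, hct]
      congr 2
      omega
    | false =>
      have hct : (false :: x).count true = x.count true := by
        simp [List.count_cons]
      have hcf : (false :: x).count false = x.count false + 1 := by
        simp [List.count_cons]
      rw [List.cons_append, eb_false, ih r (by omega), hct, hcf]
      omega

end Stmt3Aux


/-- Characterization of words without critical factors. -/
theorem stmt3 (m n : ℕ) (w : List Bool) (hn : w.count true = m) (he : w.count false = n) :
    ¬ HasCriticalFactor m n w ↔
      ∃ a b c : ℕ, w = List.replicate a false ++
        (List.replicate b [true, false]).flatten ++ List.replicate c true := by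
  constructor
  · intro hnc
    obtain ⟨a0, A, hw, hlen, hsum⟩ := Stmt3Aux.exists_rep w
    rw [hn] at hlen
    rw [he] at hsum
    set k := mw m n w with hk
    obtain ⟨hkmn, hC1', hC2'⟩ := Stmt3Aux.mw_facts m n w he
    have hkm : k ≤ m := le_trans hkmn (min_le_left _ _)
    have hkn : k ≤ n := le_trans hkmn (min_le_right _ _)
    have hP : ∀ r, eastBefore w r = a0 + (A.take r).sum := by
      intro r; rw [hw, Stmt3Aux.eb_word]
    have hC1 : ∀ r < m, a0 + (A.take r).sum ≤ (n - k) + min r k := by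
      intro r hr
      have := hC1' r hr
      rw [hP] at this
      exact this
    have hPle : ∀ r, a0 + (A.take r).sum ≤ n := by
      intro r
      have := Stmt3Aux.sum_take_le A r
      omega
    have hPtm : a0 + (A.take m).sum = n := by
      rw [List.take_of_length_le (by omega)]; exact hsum
    by_cases hm : m = 0
    · have hA : A = [] := List.length_eq_zero_iff.mp (by omega)
      subst hA
      refine ⟨n, 0, 0, ?_⟩
      rw [hw, Stmt3Aux.tW_nil]
      simp at hsum
      rw [hsum]
      simp
    by_cases hn0 : n = 0
    · have hA : A = List.replicate m 0 := by
        apply List.eq_replicate_iff.mpr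
        refine ⟨by omega, ?_⟩
        intro b hb
        have hzero : A.sum = 0 := by omega
        exact List.sum_eq_zero_iff.mp hzero b hb
      have ha0 : a0 = 0 := by omega
      refine ⟨0, 0, m, ?_⟩
      rw [hw, hA, Stmt3Aux.tW_rep_zero, ha0]
      simp
    -- main case
    have hC2 : k = min m n ∨ (∃ r, r < k ∧ a0 + (A.take r).sum = n - k + r) ∨
        (k < m ∧ a0 + (A.take k).sum = n) := by
      rcases eq_or_lt_of_le hkmn with h | h
      · exact Or.inl h
      · obtain ⟨r, hrm, hrgt⟩ := hC2' h
        push_neg at hrgt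
        rw [hP] at hrgt
        have hple := hPle r
        have hrk : r ≤ k := by
          rcases Nat.lt_or_ge k r with h1 | h1
          · exfalso
            have : min r (k + 1) = k + 1 := by omega
            omega
          · omega
        rcases Nat.lt_or_ge r k with h1 | h1
        · refine Or.inr (Or.inl ⟨r, h1, ?_⟩)
          have hc := hC1 r hrm
          have hm1 : min r k = r := by omega
          have hm2 : min r (k + 1) = r := by omega
          omega
        · have hrk2 : r = k := by omega
          refine Or.inr (Or.inr ⟨by omega, ?_⟩)
          have hm2 : min r (k + 1) = r := by omega
          have hkn1 : k + 1 ≤ n := by omega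
          rw [← hrk2]
          omega
    -- contradiction helpers
    have zero_contra : ∀ r, r < k → r < m → a0 + (A.take r).sum = n - k + r →
        a0 + (A.take (r + 1)).sum = a0 + (A.take r).sum → False := by
      intro r hrk hrm htch heq
      have hrA : r < A.length := by omega
      have hstep := List.sum_take_succ A r hrA
      have hA0 : A[r] = 0 := by omega
      have hdsum : 0 < (A.drop r).sum := by
        have h1 : (A.take r).sum + (A.drop r).sum = A.sum := by
          rw [← List.sum_append, List.take_append_drop]
        omega
      obtain ⟨j, g, v, hdec, hg⟩ := Stmt3Aux.zrun _ hdsum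
      have hj : 1 ≤ j := by
        rcases Nat.eq_zero_or_pos j with h0 | h0
        · exfalso
          rw [h0] at hdec
          simp only [List.replicate_zero, List.nil_append] at hdec
          rw [List.drop_eq_getElem_cons hrA] at hdec
          injection hdec with h1 h2
          omega
        · exact h0
      have hAdec : A = A.take r ++ (List.replicate j 0 ++ g :: v) := by
        rw [← hdec, List.take_append_drop]
      have hlt : (A.take r).length = r := by
        rw [List.length_take]; omega
      have hlast : A.take r = [] ∨ ∃ u' a', A.take r = u' ++ [a'] ∧ 1 ≤ a' := by
        rcases Nat.eq_zero_or_pos r with h0 | h0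
        · left; rw [h0]; rfl
        · right
          have hr1 : r - 1 < A.length := by omega
          refine ⟨A.take (r - 1), A[r - 1], ?_, ?_⟩
          · have h2 : A.take (r - 1) ++ (A.drop (r - 1)).take 1 = A.take r := by
              rw [← List.take_add, show r - 1 + 1 = r from by omega]
            rw [← h2, List.drop_eq_getElem_cons hr1]
            rfl
          · have hs1 := List.sum_take_succ A (r - 1) hr1
            have hC1r1 := hC1 (r - 1) (by omega)
            have hmm : min (r - 1) k = r - 1 := by omega
            have hrw : a0 + (A.take (r - 1 + 1)).sum = n - k + r := by
              rw [show r - 1 + 1 = r from by omega]; exact htch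
            omega
      refine hnc (Stmt3Aux.crit1 m n k a0 j g (A.take r) v w ?_ hk.symm hj hg hkn hkm
        (by rw [hlt]; omega) (by rw [hlt]; exact htch) hlast)
      rw [hw]
      rw [← hAdec]
    have two_contra : ∀ r, r < m →
        a0 + (A.take r).sum + 2 ≤ a0 + (A.take (r + 1)).sum →
        a0 + (A.take (r + 1)).sum = n - k + r + 1 → False := by
      intro r hrm hge hsum1
      have hrA : r < A.length := by omega
      have hstep := List.sum_take_succ A r hrA
      have h1 : A.take r ++ A[r] :: A.drop (r + 1) = A := by
        rw [← List.drop_eq_getElem_cons hrA]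
        exact List.take_append_drop r A
      have hlt : (A.take r).length = r := by
        rw [List.length_take]; omega
      refine hnc (Stmt3Aux.crit2 m n k a0 (A[r]) (A.take r) (A.drop (r + 1)) w ?_ hk.symm
        (by omega) hkn hkm ?_ ?_)
      · rw [h1]; exact hw
      · rw [h1]; exact hsum
      · rw [hlt]; omega
    have step_up : ∀ r, r + 1 < k → a0 + (A.take r).sum = n - k + r →
        a0 + (A.take (r + 1)).sum = n - k + (r + 1) := by
      intro r hrk htch
      have hC1r := hC1 (r + 1) (by omega)
      have hmin : min (r + 1) k = r + 1 := by omega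
      have hrA : r < A.length := by omega
      have hstep := List.sum_take_succ A r hrA
      rcases Nat.lt_or_ge (a0 + (A.take (r + 1)).sum) (n - k + (r + 1)) with hlt | hge
      · exact absurd (zero_contra r (by omega) (by omega) htch (by omega)) not_false
      · omega
    have step_down : ∀ r, r + 1 < k → a0 + (A.take (r + 1)).sum = n - k + (r + 1) →
        a0 + (A.take r).sum = n - k + r := by
      intro r hrk htch
      have hC1r := hC1 r (by omega)
      have hmin : min r k = r := by omega
      have hrA : r < A.length := by omega
      have hstep := List.sum_take_succ A r hrA
      rcases Nat.lt_or_ge (a0 + (A.take r).sum + 1) (a0 + (A.take (r + 1)).sum) with h2 | h2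
      · exact absurd (two_contra r (by omega) (by omega) (by omega)) not_false
      · omega
    by_cases htouch : ∃ r, r < k ∧ a0 + (A.take r).sum = n - k + r
    · obtain ⟨rb, hrbk, hrbt⟩ := htouch
      have up : ∀ r', rb ≤ r' → r' < k → a0 + (A.take r').sum = n - k + r' := by
        intro r' hle
        induction r', hle using Nat.le_induction with
        | base => intro _; exact hrbt
        | succ r'' hle ih =>
          intro hr'k
          exact step_up r'' hr'k (ih (by omega))
      have down : ∀ d, d ≤ rb → a0 + (A.take (rb - d)).sum = n - k + (rb - d) := by
        intro d
        induction d with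
        | zero => intro _; simpa using hrbt
        | succ d ih =>
          intro hd
          have h1 := ih (by omega)
          have h2 : rb - d = (rb - (d + 1)) + 1 := by omega
          rw [h2] at h1
          exact step_down (rb - (d + 1)) (by omega) h1
      have hall : ∀ r, r < k → a0 + (A.take r).sum = n - k + r := by
        intro r hrk
        rcases le_total r rb with h | h
        · have := down (rb - r) (by omega)
          rw [show rb - (rb - r) = r from by omega] at this
          exact this
        · exact up r h hrk
      have hk1 : 1 ≤ k := by omega
      have hPk : a0 + (A.take k).sum = n := by
        have hkm1 : k - 1 < k := by omega
        have ht1 := hall (k - 1) hkm1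
        have hk1A : k - 1 < A.length := by omega
        have hstep := List.sum_take_succ A (k - 1) hk1A
        have hple := hPle k
        have hrw : A.take (k - 1 + 1) = A.take k := by
          rw [show k - 1 + 1 = k from by omega]
        rw [hrw] at hstep
        rcases Nat.lt_or_ge (a0 + (A.take k).sum) n with hlt | hge
        · exfalso
          refine zero_contra (k - 1) hkm1 (by omega) ht1 ?_
          rw [hrw]
          omega
        · omega
      have hPr : ∀ r, k ≤ r → a0 + (A.take r).sum = n := by
        intro r h1
        have h2 := Stmt3Aux.sum_take_mono A h1
        have h3 := hPle r
        omega
      have hA : A = List.replicate k 1 ++ List.replicate (m - k) 0 := by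
        apply List.ext_getElem
        · simp; omega
        · intro i h1 h2
          have hiA : i < A.length := h1
          have hstep := List.sum_take_succ A i hiA
          by_cases hik : i < k
          · have hv : A[i] = 1 := by
              have ht1 := hall i hik
              rcases Nat.lt_or_ge (i + 1) k with h3 | h3
              · have ht2 := hall (i + 1) h3
                omega
              · have h4 : i + 1 = k := by omega
                have hrw : A.take (i + 1) = A.take k := by rw [h4]
                rw [hrw] at hstep
                omega
            rw [hv]
            rw [List.getElem_append_left (by simp; omega)]
            simp
          · have hv : A[i] = 0 := by
              have e1 := hPr i (by omega)
              have e2 := hPr (i + 1) (by omega)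
              omega
            rw [hv]
            rw [List.getElem_append_right (by simp; omega)]
            simp
      have ha0 : a0 = n - k := by
        have := hall 0 (by omega)
        simpa using this
      refine ⟨n - k, k, m - k, ?_⟩
      rw [hw, hA, Stmt3Aux.tW_append, Stmt3Aux.tW_rep_one, Stmt3Aux.tW_rep_zero, ha0]
      simp [List.append_assoc]
    · push_neg at htouch
      rcases hC2 with hmin | ⟨r, hrk, htch⟩ | ⟨hkm', hPk⟩
      · rcases le_total m n with hmn | hnm
        · have hkm2 : k = m := by omega
          have h1 : m - 1 < m := by omega
          have hC1r := hC1 (m - 1) h1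
          have hminr : min (m - 1) k = m - 1 := by omega
          have hne := htouch (m - 1) (by omega)
          have hstep := List.sum_take_succ A (m - 1) (by omega)
          have hPm' : a0 + (A.take (m - 1 + 1)).sum = n := by
            rw [show m - 1 + 1 = m from by omega]; exact hPtm
          exact absurd (two_contra (m - 1) h1 (by omega) (by omega)) not_false
        · have hkn2 : k = n := by omega
          have h0 := hC1 0 (by omega)
          have hne := htouch 0 (by omega)
          have : min 0 k = 0 := by omega
          exact absurd (show a0 + (A.take 0).sum = n - k + 0 by omega) hne
      · exact absurd htch (htouch r hrk)
      · rcases Nat.eq_zero_or_pos k with hk0 | hk1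
        · have ha0 : a0 = n := by
            have : (A.take 0).sum = 0 := by simp
            rw [hk0] at hPk
            simpa [this] using hPk
          have hA : A = List.replicate m 0 := by
            apply List.eq_replicate_iff.mpr
            refine ⟨by omega, ?_⟩
            intro b hb
            have hzero : A.sum = 0 := by omega
            exact List.sum_eq_zero_iff.mp hzero b hb
          refine ⟨n, 0, m, ?_⟩
          rw [hw, hA, Stmt3Aux.tW_rep_zero, ha0]
          simp
        · have h1 : k - 1 < m := by omega
          have hC1r := hC1 (k - 1) h1
          have hminr : min (k - 1) k = k - 1 := by omega
          have hne := htouch (k - 1) (by omega)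
          have hstep := List.sum_take_succ A (k - 1) (by omega)
          have hPk' : a0 + (A.take (k - 1 + 1)).sum = n := by
            rw [show k - 1 + 1 = k from by omega]; exact hPk
          exact absurd (two_contra (k - 1) h1 (by omega) (by omega)) not_false
  · rintro ⟨a, b, c, hwst⟩ hcf
    obtain ⟨x, y, i, hi, hcase⟩ := hcf
    have hwst' : w = List.replicate a false ++
        Stmt3Aux.tW (List.replicate b 1 ++ List.replicate c 0) := by
      rw [hwst, Stmt3Aux.tW_append, Stmt3Aux.tW_rep_one, Stmt3Aux.tW_rep_zero,
        List.append_assoc]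
    have hE : ∀ r, eastBefore w r = a + min r b := by
      intro r
      rw [hwst', Stmt3Aux.eb_word, Stmt3Aux.sum_take_ones_zeros]
    have hnab : n = a + b := by
      rw [← he, hwst']
      simp [List.count_append, List.count_replicate, List.sum_replicate]
    rcases hcase with ⟨hdec, hxl, hp⟩ | ⟨hdec, hyh, hp⟩
    · obtain ⟨i', rfl⟩ : ∃ i', i = i' + 2 := ⟨i - 2, by omega⟩
      have hz : w = x ++ ((List.replicate (i' + 2) true ++ [false]) ++ y) := by
        rw [hdec, List.append_assoc]
      have hebz0 : eastBefore ((List.replicate (i' + 2) true ++ [false]) ++ y) 0 = 0 := by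
        rw [List.replicate_succ]
        simp
      have hebz1 : eastBefore ((List.replicate (i' + 2) true ++ [false]) ++ y) 1 = 0 := by
        rw [List.replicate_succ, List.replicate_succ]
        simp
      have e1 : eastBefore w (x.count true) = x.count false := by
        rw [hz, Stmt3Aux.eb_append_ge x _ _ (le_refl _), Nat.sub_self, hebz0]
        omega
      have e2 : eastBefore w (x.count true + 1) = x.count false := by
        rw [hz, Stmt3Aux.eb_append_ge x _ _ (by omega),
          show x.count true + 1 - x.count true = 1 from by omega, hebz1]
        omega
      have hcflt : x.count false + 1 ≤ n := by
        have : w.count false = x.count false +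
            (((List.replicate (i' + 2) true ++ [false]) ++ y).count false) := by
          rw [hz, List.count_append]
        have h2 : ((List.replicate (i' + 2) true ++ [false]) ++ y).count false =
            1 + y.count false := by
          simp [List.count_append, List.count_replicate]
          omega
        omega
      have hE1 := hE (x.count true)
      have hE2 := hE (x.count true + 1)
      omega
    · have hz : w = x ++ (([true] ++ List.replicate i false) ++ y) := by
        rw [hdec, List.append_assoc]
      have hebz0 : eastBefore (([true] ++ List.replicate i false) ++ y) 0 = 0 := by
        simp
      have hebz1 : eastBefore (([true] ++ List.replicate i false) ++ y) 1 =
          i + eastBefore y 0 := by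
        have : ([true] ++ List.replicate i false) ++ y =
            true :: (List.replicate i false ++ y) := by simp
        rw [this, Stmt3Aux.eb_true_succ, Stmt3Aux.eb_rep_false]
      have e1 : eastBefore w (x.count true) = x.count false := by
        rw [hz, Stmt3Aux.eb_append_ge x _ _ (le_refl _), Nat.sub_self, hebz0]
        omega
      have e2 : eastBefore w (x.count true + 1) = x.count false + (i + eastBefore y 0) := by
        rw [hz, Stmt3Aux.eb_append_ge x _ _ (by omega),
          show x.count true + 1 - x.count true = 1 from by omega, hebz1]
      have hE1 := hE (x.count true)
      have hE2 := hE (x.count true + 1)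
      omega
end

section
/- In the path algebra 𝒫, the elements s = 𝖾𝗇 and t = 𝗇𝖾 commute with each other, and they are algebraically independent over ℂ(q); consequently the subalgebra of 𝒫 generated by s and t is a commutative polynomial algebra ℂ(q)[s,t] in two variables. -/
noncomputable section Aux

set_option maxHeartbeats 1000000
set_option synthInstance.maxHeartbeats 1000000

open MvPolynomial

/-- Polynomial ring in two variables over `F`. -/
abbrev Rg : Type := MvPolynomial (Fin 2) F

lemma qq_ne_zero : qq ≠ 0 := RatFunc.X_ne_zero

lemma qq_ne_one : qq ≠ 1 := by
  intro h
  have h2 : algebraMap (Polynomial ℂ) (RatFunc ℂ) Polynomial.X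
      = algebraMap (Polynomial ℂ) (RatFunc ℂ) 1 := by
    simpa [qq, RatFunc.algebraMap_X, map_one] using h
  have h3 := RatFunc.algebraMap_injective ℂ h2
  have := congrArg Polynomial.natDegree h3
  simp [Polynomial.natDegree_X, Polynomial.natDegree_one] at this

/-- The weight sequence. -/
def cc (j : ℤ) : Rg := X 0 + (qq ^ (-j) : F) • X 1

lemma ccrecC (j : ℤ) : C (1 + qq) * cc j = C qq * cc (j + 1) + cc (j - 1) := by
  have h3 : ((1 + qq) * qq ^ (-j) : F) = qq * qq ^ (-(j+1)) + qq ^ (-(j-1)) := by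
    rw [show (-(j+1) : ℤ) = -j - 1 from by ring, show (-(j-1) : ℤ) = -j + 1 from by ring,
      zpow_sub_one₀ qq_ne_zero, zpow_add_one₀ qq_ne_zero]
    have h5 : qq * (qq ^ (-j) * qq⁻¹) = qq ^ (-j) := by
      rw [mul_comm (qq ^ (-j)) qq⁻¹, ← mul_assoc, mul_inv_cancel₀ qq_ne_zero, one_mul]
    rw [h5]; ring
  have h4 := congrArg (MvPolynomial.C (σ := Fin 2) (R := F)) h3
  simp only [map_mul, map_add, map_one] at h4
  unfold cc
  simp only [MvPolynomial.smul_eq_C_mul, map_add, map_one]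
  linear_combination h4 * (X 1 : Rg)

abbrev Vg := ℤ → Rg

/-- The operator representing `𝖾`. -/
def Eop : Vg →ₗ[F] Vg where
  toFun f := fun j => cc (j + 1) * f (j + 1)
  map_add' f g := by funext j; simp [mul_add]
  map_smul' a f := by funext j; simp [mul_smul_comm]

/-- The operator representing `𝗇`. -/
def Nop : Vg →ₗ[F] Vg where
  toFun f := fun j => f (j - 1)
  map_add' f g := by funext j; simp
  map_smul' a f := by funext j; simp

@[simp] lemma Eop_apply (f : Vg) (j : ℤ) : Eop f j = cc (j + 1) * f (j + 1) := rfl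
@[simp] lemma Nop_apply (f : Vg) (j : ℤ) : Nop f j = f (j - 1) := rfl

def phi0 : FreeAlgebra F Bool →ₐ[F] Module.End F Vg :=
  FreeAlgebra.lift F (fun b => cond b Nop Eop)

lemma phi0_rel : ∀ ⦃a b : FreeAlgebra F Bool⦄, PathRel a b → phi0 a = phi0 b := by
  intro a b h
  cases h with
  | mod1 =>
      simp only [map_smul, map_add, map_mul, phi0, FreeAlgebra.lift_ι_apply, Bool.cond_true,
        Bool.cond_false]
      refine LinearMap.ext fun f => ?_
      funext j
      simp only [LinearMap.smul_apply, Module.End.mul_apply, LinearMap.add_apply,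
        Eop_apply, Nop_apply, Pi.smul_apply, Pi.add_apply]
      rw [show (j : ℤ) + 1 - 1 = j from by ring, show (j : ℤ) - 1 + 1 = j from by ring,
        show (j : ℤ) + 1 + 1 - 1 = j + 1 from by ring]
      have h' := ccrecC (j + 1)
      rw [show (j : ℤ) + 1 - 1 = j from by ring] at h'
      simp only [MvPolynomial.smul_eq_C_mul]
      linear_combination h' * (cc (j+1) * f (j+1))
  | mod2 =>
      simp only [map_smul, map_add, map_mul, phi0, FreeAlgebra.lift_ι_apply, Bool.cond_true,
        Bool.cond_false]
      refine LinearMap.ext fun f => ?_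
      funext j
      simp only [LinearMap.smul_apply, Module.End.mul_apply, LinearMap.add_apply,
        Eop_apply, Nop_apply, Pi.smul_apply, Pi.add_apply]
      rw [show (j : ℤ) - 1 + 1 = j from by ring, show (j : ℤ) + 1 - 1 = j from by ring,
        show (j : ℤ) - 1 - 1 + 1 = j - 1 from by ring]
      have h' := ccrecC j
      simp only [MvPolynomial.smul_eq_C_mul]
      linear_combination h' * f (j - 1)

def phi : PathAlg →ₐ[F] Module.End F Vg :=
  RingQuot.liftAlgHom F ⟨phi0, phi0_rel⟩

lemma phi_Pe : phi Pe = Eop := by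
  rw [Pe, phi, RingQuot.liftAlgHom_mkAlgHom_apply]
  simp [phi0, FreeAlgebra.lift_ι_apply]

lemma phi_Pn : phi Pn = Nop := by
  rw [Pn, phi, RingQuot.liftAlgHom_mkAlgHom_apply]
  simp [phi0, FreeAlgebra.lift_ι_apply]

lemma Spow (a : ℕ) (f : Vg) (j : ℤ) :
    ((Eop * Nop : Module.End F Vg) ^ a) f j = cc (j+1) ^ a * f j := by
  induction a generalizing f with
  | zero => simp
  | succ a ih =>
      rw [pow_succ']
      simp only [Module.End.mul_apply, Eop_apply, Nop_apply]
      rw [show (j : ℤ) + 1 - 1 = j from by ring, ih]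
      ring

lemma Tpow (b : ℕ) (f : Vg) (j : ℤ) :
    ((Nop * Eop : Module.End F Vg) ^ b) f j = cc j ^ b * f j := by
  induction b generalizing f with
  | zero => simp
  | succ b ih =>
      rw [pow_succ']
      simp only [Module.End.mul_apply, Eop_apply, Nop_apply]
      rw [show (j : ℤ) - 1 + 1 = j from by ring, ih]
      ring

/-- Delta function at 0. -/
def dlt : Vg := fun j => if j = 0 then 1 else 0

lemma mu_prop : (1 - qq⁻¹) * (1 - qq⁻¹)⁻¹ = 1 := by
  apply mul_inv_cancel₀
  intro h
  have : qq⁻¹ = 1 := by linear_combination -h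
  exact qq_ne_one (by rw [← inv_inv qq, this, inv_one])

end Aux

set_option maxHeartbeats 1000000 in
set_option synthInstance.maxHeartbeats 1000000 in
/-- `s = 𝖾𝗇` and `t = 𝗇𝖾` commute and are algebraically independent,
so they generate a commutative polynomial algebra `ℂ(q)[s,t]`. -/
theorem stmt5 :
    (Pe * Pn) * (Pn * Pe) = (Pn * Pe) * (Pe * Pn) ∧
    ∀ P : MvPolynomial (Fin 2) F, evalST (Pe * Pn) (Pn * Pe) P = 0 → P = 0 := by
  constructor
  · -- commuting
    have h1 := RingQuot.mkAlgHom_rel F PathRel.mod1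
    have h2 := RingQuot.mkAlgHom_rel F PathRel.mod2
    simp only [map_smul, map_add, map_mul] at h1 h2
    rw [show RingQuot.mkAlgHom F PathRel (FreeAlgebra.ι F true) = Pn from rfl,
        show RingQuot.mkAlgHom F PathRel (FreeAlgebra.ι F false) = Pe from rfl] at h1 h2
    have h1' := congrArg (· * Pn) h1
    have h2' := congrArg (Pe * ·) h2
    simp only [smul_mul_assoc, add_mul, mul_smul_comm, mul_add] at h1' h2'
    have e1 : (1 + qq) • (Pe * Pn * Pe * Pn) = (1 + qq) • (Pe * (Pn * Pe * Pn)) := by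
      congr 1; noncomm_ring
    have hmain := h1'.symm.trans (e1.trans h2')
    have e2 : qq • (Pe * Pe * Pn * Pn) = qq • (Pe * (Pe * Pn * Pn)) := by
      congr 1; noncomm_ring
    rw [e2] at hmain
    have key := add_left_cancel hmain
    calc Pe * Pn * (Pn * Pe) = Pe * (Pn * Pn * Pe) := by noncomm_ring
      _ = Pn * Pe * Pe * Pn := key.symm
      _ = Pn * Pe * (Pe * Pn) := by noncomm_ring
  · intro P hP
    classical
    have h0 := congrArg phi hP
    rw [map_zero] at h0
    unfold evalST at h0
    rw [map_sum] at h0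
    simp only [map_smul, map_mul, map_pow, phi_Pe, phi_Pn] at h0
    have h1 := congrFun (congrArg (fun (T : Module.End F Vg) => T dlt) h0) 0
    simp only [LinearMap.sum_apply, LinearMap.smul_apply, Module.End.mul_apply,
      LinearMap.zero_apply, Pi.zero_apply, Finset.sum_apply, Pi.smul_apply] at h1
    have h2 : ∀ d : Fin 2 →₀ ℕ,
        (((Eop * Nop : Module.End F Vg) ^ (d 0)) (((Nop * Eop : Module.End F Vg) ^ (d 1)) dlt)) 0
          = cc 1 ^ (d 0) * cc 0 ^ (d 1) := by
      intro d
      rw [Spow, Tpow]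
      rw [show ((0 : ℤ) + 1) = 1 from by norm_num]
      simp [dlt]
    simp only [h2] at h1
    -- now h1 : ∑ d ∈ P.support, P.coeff d • (cc 1 ^ d 0 * cc 0 ^ d 1) = 0
    set g : Fin 2 → Rg := ![cc 1, cc 0] with hg
    have key : (MvPolynomial.aeval g) P = 0 := by
      rw [MvPolynomial.aeval_def, MvPolynomial.eval₂_eq']
      rw [← h1]
      apply Finset.sum_congr rfl
      intro d _
      rw [Fin.prod_univ_two]
      simp only [hg, Matrix.cons_val_zero, Matrix.cons_val_one, Matrix.head_cons]
      rw [Algebra.smul_def]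
    -- invert the linear change of variables
    set mu : F := (1 - qq⁻¹)⁻¹ with hmu
    set vv : Rg := mu • (MvPolynomial.X 1 - MvPolynomial.X 0) with hvv
    set uu : Rg := MvPolynomial.X 1 - vv with huu
    set chi : Rg →ₐ[F] Rg := MvPolynomial.aeval ![uu, vv] with hchi
    have hcu : chi (MvPolynomial.X 0) = uu := by
      simp [hchi, MvPolynomial.aeval_X]
    have hcv : chi (MvPolynomial.X 1) = vv := by
      simp [hchi, MvPolynomial.aeval_X]
    have hc1 : chi (cc 1) = MvPolynomial.X 0 := by
      have hcC : MvPolynomial.C ((1 - qq⁻¹) * mu) = (1 : Rg) := by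
        rw [mu_prop, map_one]
      simp only [map_sub, map_mul, map_one] at hcC
      rw [show (cc 1) = MvPolynomial.X 0 + (qq ^ (-(1:ℤ)) : F) • MvPolynomial.X 1 from rfl]
      rw [map_add, hcu, map_smul, hcv, zpow_neg_one]
      rw [huu, hvv]
      simp only [MvPolynomial.smul_eq_C_mul]
      linear_combination (MvPolynomial.X (R := F) 0 - MvPolynomial.X 1) * hcC
    have hc0 : chi (cc 0) = MvPolynomial.X 1 := by
      rw [show (cc 0) = MvPolynomial.X 0 + (qq ^ (-(0:ℤ)) : F) • MvPolynomial.X 1 from rfl]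
      rw [map_add, hcu, map_smul, hcv]
      rw [show (-(0:ℤ)) = 0 from by norm_num, zpow_zero, one_smul, huu]
      all_goals ring
    have hcomp : chi.comp (MvPolynomial.aeval g) = AlgHom.id F Rg := by
      apply MvPolynomial.algHom_ext
      intro i
      fin_cases i
      · simp only [AlgHom.comp_apply, MvPolynomial.aeval_X, AlgHom.id_apply, hg,
          Matrix.cons_val_zero]
        exact hc1
      · simp only [AlgHom.comp_apply, MvPolynomial.aeval_X, AlgHom.id_apply, hg,
          Matrix.cons_val_one, Matrix.head_cons]
        exact hc0
    have : P = chi ((MvPolynomial.aeval g) P) := by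
      have := congrArg (fun (ψ : Rg →ₐ[F] Rg) => ψ P) hcomp
      simpa using this.symm
    rw [key, map_zero] at this
    exact this
end

section
/- Let x and y be words in the letters 𝗇, 𝖾 and let m be a positive integer. If the word x𝖾𝗇𝖾y has m letters 𝗇 and m letters 𝖾, then in the q-Klyachko algebra 𝒦 one has (1+q)·u(λ(x𝖾𝗇𝖾y)) = q·u(λ(x𝖾𝖾𝗇y)) + u(λ(x𝗇𝖾𝖾y)). Likewise, if the word x𝗇𝖾𝗇y has m letters 𝗇 and m letters 𝖾, then (1+q)·u(λ(x𝗇𝖾𝗇y)) = q·u(λ(x𝖾𝗇𝗇y)) + u(λ(x𝗇𝗇𝖾y)). (Hence the assignment w(λ) ↦ u(λ) induces a well-defined ℂ(q)-linear map from 𝒫_{m,m} to 𝒦.) -/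
theorem eb_true_zero (w : List Bool) : eastBefore (true :: w) 0 = 0 := rfl
theorem eb_true_succ (w : List Bool) (r : ℕ) :
    eastBefore (true :: w) (r+1) = eastBefore w r := rfl
theorem eb_false (w : List Bool) (r : ℕ) :
    eastBefore (false :: w) r = eastBefore w r + 1 := by cases r <;> rfl

theorem eb_append (x z : List Bool) (r : ℕ) :
    eastBefore (x ++ z) r =
      if r < x.count true then eastBefore x r
      else x.count false + eastBefore z (r - x.count true) := by
  induction x generalizing r with
  | nil => simp [eastBefore]
  | cons b x ih =>
    have hct : ∀ b', (b' :: x).count true = x.count true + if b' = true then 1 else 0 := by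
      intro b'; cases b' <;> simp [List.count_cons]
    have hcf : ∀ b', (b' :: x).count false = x.count false + if b' = false then 1 else 0 := by
      intro b'; cases b' <;> simp [List.count_cons]
    cases b with
    | true =>
      cases r with
      | zero => simp [List.cons_append, eb_true_zero, hct]
      | succ r =>
        rw [List.cons_append, eb_true_succ, ih, hct, hcf]
        by_cases h : r < x.count true
        · rw [if_pos h, if_pos (by simp; omega), eb_true_succ]
        · rw [if_neg h, if_neg (by simp; omega)]
          simp
    | false =>
      rw [List.cons_append, eb_false, ih, hct, hcf]
      by_cases h : r < x.count true
      · rw [if_pos (by simpa using h), if_pos (by simpa using h), eb_false]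
      · rw [if_neg (by simpa using h), if_neg (by simpa using h)]
        simp
        omega

theorem eb_mono (w : List Bool) : ∀ r s : ℕ, r ≤ s → eastBefore w r ≤ eastBefore w s := by
  induction w with
  | nil => intro r s _; simp [eastBefore]
  | cons b w ih =>
    intro r s hrs
    cases b with
    | false =>
      rw [eb_false, eb_false]
      exact Nat.add_le_add_right (ih r s hrs) 1
    | true =>
      cases r with
      | zero =>
        cases s with
        | zero => exact le_refl _
        | succ s => rw [eb_true_zero]; exact Nat.zero_le _
      | succ r =>
        cases s with
        | zero => omega
        | succ s => rw [eb_true_succ, eb_true_succ]; exact ih r s (by omega)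

theorem eb_le (w : List Bool) (r : ℕ) : eastBefore w r ≤ w.count false := by
  induction w generalizing r with
  | nil => simp [eastBefore]
  | cons b w ih =>
    cases b with
    | false =>
      rw [eb_false]
      have := ih r
      simp [List.count_cons]
      omega
    | true =>
      cases r with
      | zero => rw [eb_true_zero]; exact Nat.zero_le _
      | succ r =>
        rw [eb_true_succ]
        simpa [List.count_cons] using ih r

theorem ivt (f : ℕ → ℤ) (hstep : ∀ i, f (i+1) ≤ f i + 1) (a : ℤ) :
    ∀ j1 j0 : ℕ, j0 ≤ j1 → f j0 ≤ a → a ≤ f j1 → ∃ j, j0 ≤ j ∧ j ≤ j1 ∧ f j = a := by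
  intro j1
  induction j1 with
  | zero =>
    intro j0 h h0 h1
    have : j0 = 0 := by omega
    subst this
    exact ⟨0, le_refl _, le_refl _, by omega⟩
  | succ n ih =>
    intro j0 h h0 h1
    by_cases hj : j0 ≤ n
    · by_cases ha : a ≤ f n
      · obtain ⟨j, hj1, hj2, hj3⟩ := ih j0 hj h0 ha
        exact ⟨j, hj1, by omega, hj3⟩
      · have := hstep n
        exact ⟨n+1, by omega, le_refl _, by omega⟩
    · have hj0 : j0 = n+1 := by omega
      subst hj0
      exact ⟨n+1, le_refl _, le_refl _, by omega⟩

set_option synthInstance.maxHeartbeats 1000000 in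
theorem smul_mk (r : F) (z : Kly) :
    r • z = Ideal.Quotient.mk (Ideal.span klyRels) (MvPolynomial.C r) * z :=
  Algebra.smul_def r z

set_option synthInstance.maxHeartbeats 1000000 in
theorem kly_rel (a : ℤ) :
    (1 + qq) • (uK a * uK a) = qq • (uK a * uK (a-1)) + uK a * uK (a+1) := by
  have hmem : (MvPolynomial.C (1 + qq) * (MvPolynomial.X a * MvPolynomial.X a) -
      (MvPolynomial.C qq * (MvPolynomial.X a * MvPolynomial.X (a - 1)) +
        MvPolynomial.X a * MvPolynomial.X (a + 1)) : MvPolynomial ℤ F) ∈ Ideal.span klyRels :=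
    Ideal.subset_span ⟨a, rfl⟩
  have h0 : Ideal.Quotient.mk (Ideal.span klyRels)
      (MvPolynomial.C (1 + qq) * (MvPolynomial.X a * MvPolynomial.X a)) =
      Ideal.Quotient.mk (Ideal.span klyRels)
      (MvPolynomial.C qq * (MvPolynomial.X a * MvPolynomial.X (a - 1)) +
        MvPolynomial.X a * MvPolynomial.X (a + 1)) := by
    rw [← sub_eq_zero, ← map_sub]
    exact Ideal.Quotient.eq_zero_iff_mem.mpr hmem
  simp only [map_add, map_mul] at h0
  rw [smul_mk, smul_mk]
  unfold uK
  simp only [map_add]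
  exact h0

set_option synthInstance.maxHeartbeats 1000000 in
theorem key_rel (Q : Kly) (a : ℤ) :
    (1 + qq) • (uK a * (uK a * Q)) =
      qq • (uK (a-1) * (uK a * Q)) + uK (a+1) * (uK a * Q) := by
  have h := kly_rel a
  simp only [smul_mk] at h ⊢
  linear_combination Q * h
theorem uLam_eb (m : ℕ) (w : List Bool) :
    uLam m (wordLam m w) = ∏ i ∈ Finset.range m, uK ((i : ℤ) + 1 - eastBefore w i) := by
  unfold uLam wordLam
  refine Finset.prod_congr rfl fun i hi => ?_
  have h : i < m := Finset.mem_range.mp hi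
  have h2 : m - 1 - (m - 1 - i) = i := by omega
  rw [if_pos (show m - 1 - i < m by omega), h2]

theorem uLam_split (m t j : ℕ) (ht : t < m) (hj : j < m) (hne : j ≠ t) (w : List Bool) :
    uLam m (wordLam m w) =
      uK ((t : ℤ) + 1 - eastBefore w t) * (uK ((j : ℤ) + 1 - eastBefore w j) *
        ∏ i ∈ ((Finset.range m).erase t).erase j, uK ((i : ℤ) + 1 - eastBefore w i)) := by
  rw [uLam_eb, ← Finset.mul_prod_erase _ _ (Finset.mem_range.mpr ht),
    ← Finset.mul_prod_erase _ _ (Finset.mem_erase.mpr ⟨hne, Finset.mem_range.mpr hj⟩)]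

set_option synthInstance.maxHeartbeats 1000000 in
theorem master (m t j : ℕ) (a : ℤ) (w1 w2 w3 : List Bool)
    (htm : t < m) (hjm : j < m) (hne : j ≠ t)
    (hsame2 : ∀ i, i < m → i ≠ t → i ≠ j → eastBefore w2 i = eastBefore w1 i)
    (hsame3 : ∀ i, i < m → i ≠ t → i ≠ j → eastBefore w3 i = eastBefore w1 i)
    (h1t : (t : ℤ) + 1 - eastBefore w1 t = a)
    (h1j : (j : ℤ) + 1 - eastBefore w1 j = a)
    (h2t : (t : ℤ) + 1 - eastBefore w2 t = a - 1)
    (h2j : (j : ℤ) + 1 - eastBefore w2 j = a)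
    (h3tj : ((t : ℤ) + 1 - eastBefore w3 t = a + 1 ∧ (j : ℤ) + 1 - eastBefore w3 j = a) ∨
      ((t : ℤ) + 1 - eastBefore w3 t = a ∧ (j : ℤ) + 1 - eastBefore w3 j = a + 1)) :
    (1 + qq) • uLam m (wordLam m w1) =
      qq • uLam m (wordLam m w2) + uLam m (wordLam m w3) := by
  have hQ2 : (∏ i ∈ ((Finset.range m).erase t).erase j, uK ((i : ℤ) + 1 - eastBefore w2 i)) =
      ∏ i ∈ ((Finset.range m).erase t).erase j, uK ((i : ℤ) + 1 - eastBefore w1 i) := by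
    refine Finset.prod_congr rfl fun i hi => ?_
    obtain ⟨hij, hit, him⟩ :
        i ≠ j ∧ i ≠ t ∧ i ∈ Finset.range m := by
      have h1 := Finset.mem_erase.mp hi
      have h2 := Finset.mem_erase.mp h1.2
      exact ⟨h1.1, h2.1, h2.2⟩
    rw [hsame2 i (Finset.mem_range.mp him) hit hij]
  have hQ3 : (∏ i ∈ ((Finset.range m).erase t).erase j, uK ((i : ℤ) + 1 - eastBefore w3 i)) =
      ∏ i ∈ ((Finset.range m).erase t).erase j, uK ((i : ℤ) + 1 - eastBefore w1 i) := by
    refine Finset.prod_congr rfl fun i hi => ?_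
    obtain ⟨hij, hit, him⟩ :
        i ≠ j ∧ i ≠ t ∧ i ∈ Finset.range m := by
      have h1 := Finset.mem_erase.mp hi
      have h2 := Finset.mem_erase.mp h1.2
      exact ⟨h1.1, h2.1, h2.2⟩
    rw [hsame3 i (Finset.mem_range.mp him) hit hij]
  have h := kly_rel a
  simp only [smul_mk] at h ⊢
  rcases h3tj with ⟨h3t, h3j⟩ | ⟨h3t, h3j⟩ <;>
    rw [uLam_split m t j htm hjm hne w1, uLam_split m t j htm hjm hne w2,
      uLam_split m t j htm hjm hne w3, hQ2, hQ3, h1t, h1j, h2t, h2j, h3t, h3j] <;>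
    linear_combination (∏ i ∈ ((Finset.range m).erase t).erase j,
      uK ((i : ℤ) + 1 - eastBefore w1 i)) * h
-- block computations, case 1
theorem ebB1 (y : List Bool) : eastBefore (false :: true :: false :: y) 0 = 1 := rfl
theorem ebB1s (y : List Bool) (r : ℕ) :
    eastBefore (false :: true :: false :: y) (r + 1) = eastBefore y r + 2 := rfl
theorem ebB2 (y : List Bool) : eastBefore (false :: false :: true :: y) 0 = 2 := rfl
theorem ebB2s (y : List Bool) (r : ℕ) :
    eastBefore (false :: false :: true :: y) (r + 1) = eastBefore y r + 2 := rfl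
theorem ebB3 (y : List Bool) : eastBefore (true :: false :: false :: y) 0 = 0 := rfl
theorem ebB3s (y : List Bool) (r : ℕ) :
    eastBefore (true :: false :: false :: y) (r + 1) = eastBefore y r + 2 := rfl
-- block computations, case 2
theorem ebC1 (y : List Bool) : eastBefore (true :: false :: true :: y) 0 = 0 := rfl
theorem ebC1a (y : List Bool) : eastBefore (true :: false :: true :: y) 1 = 1 := rfl
theorem ebC1s (y : List Bool) (r : ℕ) :
    eastBefore (true :: false :: true :: y) (r + 2) = eastBefore y r + 1 := rfl
theorem ebC2 (y : List Bool) : eastBefore (false :: true :: true :: y) 0 = 1 := rfl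
theorem ebC2a (y : List Bool) : eastBefore (false :: true :: true :: y) 1 = 1 := rfl
theorem ebC2s (y : List Bool) (r : ℕ) :
    eastBefore (false :: true :: true :: y) (r + 2) = eastBefore y r + 1 := rfl
theorem ebC3 (y : List Bool) : eastBefore (true :: true :: false :: y) 0 = 0 := rfl
theorem ebC3a (y : List Bool) : eastBefore (true :: true :: false :: y) 1 = 0 := rfl
theorem ebC3s (y : List Bool) (r : ℕ) :
    eastBefore (true :: true :: false :: y) (r + 2) = eastBefore y r + 1 := rfl
/-- The map `w(λ) ↦ u(λ)` respects the modular relations, hence induces a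
well-defined linear map `𝒫_{m,m} → 𝒦`. Letters: `true = 𝗇`, `false = 𝖾`. -/
theorem stmt8 (m : ℕ) (hm : 1 ≤ m) (x y : List Bool) :
    (((x ++ [false, true, false] ++ y).count true = m →
      (x ++ [false, true, false] ++ y).count false = m →
      (1 + qq) • uLam m (wordLam m (x ++ [false, true, false] ++ y)) =
        qq • uLam m (wordLam m (x ++ [false, false, true] ++ y)) +
        uLam m (wordLam m (x ++ [true, false, false] ++ y)))) ∧
    (((x ++ [true, false, true] ++ y).count true = m →
      (x ++ [true, false, true] ++ y).count false = m →
      (1 + qq) • uLam m (wordLam m (x ++ [true, false, true] ++ y)) =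
        qq • uLam m (wordLam m (x ++ [false, true, true] ++ y)) +
        uLam m (wordLam m (x ++ [true, true, false] ++ y)))) := by
  constructor
  · -- Case 1 : factor 𝖾𝗇𝖾
    intro hn hf
    have e1 : x ++ [false, true, false] ++ y = x ++ (false :: true :: false :: y) := by simp
    have e2 : x ++ [false, false, true] ++ y = x ++ (false :: false :: true :: y) := by simp
    have e3 : x ++ [true, false, false] ++ y = x ++ (true :: false :: false :: y) := by simp
    rw [e1] at hn hf
    rw [e1, e2, e3]
    have hn' : x.count true + 1 + y.count true = m := by
      simp [List.count_append] at hn; omega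
    have hf' : x.count false + 2 + y.count false = m := by
      simp [List.count_append] at hf; omega
    set t := x.count true with hT
    set c := x.count false with hC
    have htm : t < m := by omega
    have ebw1 : ∀ i, eastBefore (x ++ (false :: true :: false :: y)) i =
        if i < t then eastBefore x i
        else c + eastBefore (false :: true :: false :: y) (i - t) := fun i => eb_append x _ i
    have ebw2 : ∀ i, eastBefore (x ++ (false :: false :: true :: y)) i =
        if i < t then eastBefore x i
        else c + eastBefore (false :: false :: true :: y) (i - t) := fun i => eb_append x _ i
    have ebw3 : ∀ i, eastBefore (x ++ (true :: false :: false :: y)) i =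
        if i < t then eastBefore x i
        else c + eastBefore (true :: false :: false :: y) (i - t) := fun i => eb_append x _ i
    have f1t : eastBefore (x ++ (false :: true :: false :: y)) t = c + 1 := by
      rw [ebw1 t, if_neg (lt_irrefl t), Nat.sub_self, ebB1]
    have f2t : eastBefore (x ++ (false :: false :: true :: y)) t = c + 2 := by
      rw [ebw2 t, if_neg (lt_irrefl t), Nat.sub_self, ebB2]
    have f3t : eastBefore (x ++ (true :: false :: false :: y)) t = c := by
      rw [ebw3 t, if_neg (lt_irrefl t), Nat.sub_self, ebB3, Nat.add_zero]
    have hsame2 : ∀ i, i ≠ t →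
        eastBefore (x ++ (false :: false :: true :: y)) i =
          eastBefore (x ++ (false :: true :: false :: y)) i := by
      intro i hit
      rw [ebw1 i, ebw2 i]
      by_cases h : i < t
      · rw [if_pos h, if_pos h]
      · rw [if_neg h, if_neg h]
        obtain ⟨r, hr⟩ : ∃ r, i - t = r + 1 := ⟨i - t - 1, by omega⟩
        rw [hr, ebB1s, ebB2s]
    have hsame3 : ∀ i, i ≠ t →
        eastBefore (x ++ (true :: false :: false :: y)) i =
          eastBefore (x ++ (false :: true :: false :: y)) i := by
      intro i hit
      rw [ebw1 i, ebw3 i]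
      by_cases h : i < t
      · rw [if_pos h, if_pos h]
      · rw [if_neg h, if_neg h]
        obtain ⟨r, hr⟩ : ∃ r, i - t = r + 1 := ⟨i - t - 1, by omega⟩
        rw [hr, ebB1s, ebB3s]
    set a : ℤ := (t : ℤ) - c with hA
    -- facts for the intermediate value argument
    have hstep : ∀ i : ℕ, ((i + 1 : ℕ) : ℤ) + 1 -
        eastBefore (x ++ (false :: true :: false :: y)) (i + 1) ≤
        ((i : ℤ) + 1 - eastBefore (x ++ (false :: true :: false :: y)) i) + 1 := by
      intro i
      have := eb_mono (x ++ (false :: true :: false :: y)) i (i + 1) (Nat.le_succ i)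
      push_cast
      omega
    have hEnd : eastBefore (x ++ (false :: true :: false :: y)) (m - 1) ≤ m := by
      have h1 := eb_le (x ++ (false :: true :: false :: y)) (m - 1)
      have h2 : (x ++ (false :: true :: false :: y)).count false = m := by
        simp [List.count_append]; omega
      omega
    -- find the second index j with value a
    obtain ⟨j, hjm, hjt, hjv⟩ : ∃ j, j < m ∧ j ≠ t ∧
        (j : ℤ) + 1 - eastBefore (x ++ (false :: true :: false :: y)) j = a := by
      by_cases hcase : t + 1 < m ∧
          a ≤ ((m - 1 : ℕ) : ℤ) + 1 - eastBefore (x ++ (false :: true :: false :: y)) (m - 1)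
      · have hFt1 : c + 2 ≤ eastBefore (x ++ (false :: true :: false :: y)) (t + 1) := by
          rw [ebw1 (t + 1), if_neg (by omega)]
          obtain ⟨r, hr⟩ : ∃ r, t + 1 - t = r + 1 := ⟨0, by omega⟩
          rw [hr, ebB1s]
          omega
        obtain ⟨j, hj1, hj2, hj3⟩ := ivt
          (fun i => (i : ℤ) + 1 - eastBefore (x ++ (false :: true :: false :: y)) i)
          hstep a (m - 1) (t + 1) (by omega) (by push_cast; omega) hcase.2
        exact ⟨j, by omega, by omega, hj3⟩
      · have ha1 : 1 ≤ a := by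
          rcases Nat.lt_or_ge (t + 1) m with h | h
          · have h2 : ¬ a ≤ ((m - 1 : ℕ) : ℤ) + 1 -
                eastBefore (x ++ (false :: true :: false :: y)) (m - 1) := by
              intro hh; exact hcase ⟨h, hh⟩
            push_cast        at h2 ⊢
            omega
          · omega
        have ht1 : 1 ≤ t := by omega
        have hFtm1 : eastBefore (x ++ (false :: true :: false :: y)) (t - 1) ≤ c := by
          rw [ebw1 (t - 1), if_pos (by omega)]
          have := eb_le x (t - 1)
          omega
        obtain ⟨j, hj1, hj2, hj3⟩ := ivt
          (fun i => (i : ℤ) + 1 - eastBefore (x ++ (false :: true :: false :: y)) i)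
          hstep a (t - 1) 0 (by omega) (by push_cast; omega)
          (by push_cast; omega)
        exact ⟨j, by omega, by omega, hj3⟩
    refine master m t j a _ _ _ htm hjm hjt
      (fun i _ hit _ => hsame2 i hit) (fun i _ hit _ => hsame3 i hit)
      ?_ hjv ?_ ?_ (Or.inl ⟨?_, ?_⟩)
    · rw [f1t]; push_cast; omega
    · rw [f2t]; push_cast; omega
    · rw [hsame2 j hjt]; exact hjv
    · rw [f3t]; push_cast; omega
    · rw [hsame3 j hjt]; exact hjv
  · -- Case 2 : factor 𝗇𝖾𝗇
    intro hn hf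
    have e1 : x ++ [true, false, true] ++ y = x ++ (true :: false :: true :: y) := by simp
    have e2 : x ++ [false, true, true] ++ y = x ++ (false :: true :: true :: y) := by simp
    have e3 : x ++ [true, true, false] ++ y = x ++ (true :: true :: false :: y) := by simp
    rw [e1] at hn hf
    rw [e1, e2, e3]
    have hn' : x.count true + 2 + y.count true = m := by
      simp [List.count_append] at hn; omega
    have hf' : x.count false + 1 + y.count false = m := by
      simp [List.count_append] at hf; omega
    set t := x.count true with hT
    set c := x.count false with hC
    have htm : t < m := by omega
    have hjm : t + 1 < m := by omega
    have ebw1 : ∀ i, eastBefore (x ++ (true :: false :: true :: y)) i =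
        if i < t then eastBefore x i
        else c + eastBefore (true :: false :: true :: y) (i - t) := fun i => eb_append x _ i
    have ebw2 : ∀ i, eastBefore (x ++ (false :: true :: true :: y)) i =
        if i < t then eastBefore x i
        else c + eastBefore (false :: true :: true :: y) (i - t) := fun i => eb_append x _ i
    have ebw3 : ∀ i, eastBefore (x ++ (true :: true :: false :: y)) i =
        if i < t then eastBefore x i
        else c + eastBefore (true :: true :: false :: y) (i - t) := fun i => eb_append x _ i
    have f1t : eastBefore (x ++ (true :: false :: true :: y)) t = c := by
      rw [ebw1 t, if_neg (lt_irrefl t), Nat.sub_self, ebC1, Nat.add_zero]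
    have f2t : eastBefore (x ++ (false :: true :: true :: y)) t = c + 1 := by
      rw [ebw2 t, if_neg (lt_irrefl t), Nat.sub_self, ebC2]
    have f3t : eastBefore (x ++ (true :: true :: false :: y)) t = c := by
      rw [ebw3 t, if_neg (lt_irrefl t), Nat.sub_self, ebC3, Nat.add_zero]
    have hsub1 : t + 1 - t = 1 := by omega
    have f1j : eastBefore (x ++ (true :: false :: true :: y)) (t + 1) = c + 1 := by
      rw [ebw1 (t + 1), if_neg (by omega), hsub1, ebC1a]
    have f2j : eastBefore (x ++ (false :: true :: true :: y)) (t + 1) = c + 1 := by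
      rw [ebw2 (t + 1), if_neg (by omega), hsub1, ebC2a]
    have f3j : eastBefore (x ++ (true :: true :: false :: y)) (t + 1) = c := by
      rw [ebw3 (t + 1), if_neg (by omega), hsub1, ebC3a, Nat.add_zero]
    have hsame2 : ∀ i, i ≠ t → i ≠ t + 1 →
        eastBefore (x ++ (false :: true :: true :: y)) i =
          eastBefore (x ++ (true :: false :: true :: y)) i := by
      intro i hit hit1
      rw [ebw1 i, ebw2 i]
      by_cases h : i < t
      · rw [if_pos h, if_pos h]
      · rw [if_neg h, if_neg h]
        obtain ⟨r, hr⟩ : ∃ r, i - t = r + 2 := ⟨i - t - 2, by omega⟩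
        rw [hr, ebC1s, ebC2s]
    have hsame3 : ∀ i, i ≠ t → i ≠ t + 1 →
        eastBefore (x ++ (true :: true :: false :: y)) i =
          eastBefore (x ++ (true :: false :: true :: y)) i := by
      intro i hit hit1
      rw [ebw1 i, ebw3 i]
      by_cases h : i < t
      · rw [if_pos h, if_pos h]
      · rw [if_neg h, if_neg h]
        obtain ⟨r, hr⟩ : ∃ r, i - t = r + 2 := ⟨i - t - 2, by omega⟩
        rw [hr, ebC1s, ebC3s]
    refine master m t (t + 1) ((t : ℤ) + 1 - c) _ _ _ htm hjm (by omega)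
      (fun i _ hit hij => hsame2 i hit hij) (fun i _ hit hij => hsame3 i hit hij)
      ?_ ?_ ?_ ?_ (Or.inr ⟨?_, ?_⟩)
    · rw [f1t]
    · rw [f1j]; push_cast; omega
    · rw [f2t]; push_cast; omega
    · rw [f2j]; push_cast; omega
    · rw [f3t]
    · rw [f3j]; push_cast; omega
end

section
/- Let ℓ ≥ 0 and N ≥ ℓ+1 be integers, and let λ be a partition with exactly ℓ nonzero parts satisfying λ_1 ≤ N−1. Then H_ℓ^N(λ) = q^ℓ · [N−ℓ]_q · H_ℓ^{N−1}(λ). -/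
namespace Stmt10Aux

lemma succAbove_val {M : ℕ} (r : Fin (M+1)) (x : Fin M) :
    ((r.succAbove x : Fin (M+1)) : ℕ) = if (x:ℕ) < (r:ℕ) then (x:ℕ) else (x:ℕ)+1 := by
  rw [Fin.succAbove]; split_ifs with h h2 h3 <;> simp [Fin.lt_def] at * <;> omega

def insEmb (M : ℕ) (r : Fin (M+1)) (ρ' : Fin M ↪ Fin M) : Fin (M+1) ↪ Fin (M+1) :=
  ⟨fun j => if h : j = Fin.last M then r else r.succAbove (ρ' (j.castPred h)), by
    intro a b hab
    simp only at hab
    split_ifs at hab with ha hb hb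
    · rw [ha, hb]
    · exact absurd hab.symm (Fin.succAbove_ne r _)
    · exact absurd hab (Fin.succAbove_ne r _)
    · have h1 := ρ'.injective (Fin.succAbove_right_injective hab)
      have := congrArg Fin.castSucc h1
      rwa [Fin.castSucc_castPred, Fin.castSucc_castPred] at this⟩

@[simp] lemma ins_last {M : ℕ} (r : Fin (M+1)) (ρ' : Fin M ↪ Fin M) :
    insEmb M r ρ' (Fin.last M) = r := by exact dif_pos rfl

@[simp] lemma ins_castSucc {M : ℕ} (r : Fin (M+1)) (ρ' : Fin M ↪ Fin M) (j : Fin M) :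
    insEmb M r ρ' j.castSucc = r.succAbove (ρ' j) := by
  have h : j.castSucc ≠ Fin.last M := (Fin.castSucc_lt_last j).ne
  exact dif_neg h

lemma ins_bijective (M : ℕ) :
    Function.Bijective (fun p : Fin (M+1) × (Fin M ↪ Fin M) => insEmb M p.1 p.2) := by
  rw [Fintype.bijective_iff_injective_and_card]
  constructor
  · rintro ⟨r, ρ⟩ ⟨s, σ⟩ h
    simp only at h
    have hrs : r = s := by
      have := congrArg (fun e : Fin (M+1) ↪ Fin (M+1) => e (Fin.last M)) h
      simpa using this
    subst hrs
    have hρσ : ρ = σ := by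
      ext j
      have := congrArg (fun e : Fin (M+1) ↪ Fin (M+1) => e j.castSucc) h
      simp only [ins_castSucc] at this
      exact congrArg Fin.val (Fin.succAbove_right_injective this)
    rw [hρσ]
  · rw [Fintype.card_prod, Fintype.card_embedding_eq, Fintype.card_embedding_eq,
      Fintype.card_fin, Fintype.card_fin, Nat.descFactorial_self, Nat.descFactorial_self,
      Nat.factorial_succ]

lemma ncard_pre {K : ℕ} (ρ' : Fin K ↪ Fin K) (S : Set (Fin K)) :
    (ρ' ⁻¹' S).ncard = S.ncard := by
  have hb : Function.Bijective ρ' := Finite.injective_iff_bijective.mp ρ'.injective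
  conv_rhs => rw [← Set.image_preimage_eq S hb.surjective]
  rw [Set.ncard_image_of_injective _ ρ'.injective]

lemma ncard_lt (K l : ℕ) (h : l ≤ K) : ({i : Fin K | (i:ℕ) < l}).ncard = l := by
  have : {i : Fin K | (i:ℕ) < l} = Set.range (Fin.castLE h) := by
    ext i
    simp only [Set.mem_setOf_eq, Set.mem_range]
    constructor
    · intro hi; exact ⟨⟨i, hi⟩, rfl⟩
    · rintro ⟨j, rfl⟩; exact j.isLt
  rw [this, ← Set.image_univ, Set.ncard_image_of_injective _ (Fin.castLE_injective h),
    Set.ncard_univ, Nat.card_eq_fintype_card, Fintype.card_fin]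

lemma ncard_ge (K r : ℕ) : ({i : Fin K | r ≤ (i:ℕ)}).ncard = K - r := by
  by_cases h : r ≤ K
  · have : {i : Fin K | r ≤ (i:ℕ)} = Set.range (fun t : Fin (K - r) => (⟨r + t, by omega⟩ : Fin K)) := by
      ext i
      simp only [Set.mem_setOf_eq, Set.mem_range]
      constructor
      · intro hi; exact ⟨⟨i - r, by omega⟩, by ext; simp; omega⟩
      · rintro ⟨t, rfl⟩; simp
    rw [this, ← Set.image_univ, Set.ncard_image_of_injective _ (fun a b hab => by
      have := congrArg Fin.val hab; simp at this; exact Fin.ext this),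
      Set.ncard_univ, Nat.card_eq_fintype_card, Fintype.card_fin]
  · have h1 : {i : Fin K | r ≤ (i:ℕ)} = ∅ := by
      ext i; simp only [Set.mem_setOf_eq, Set.mem_empty_iff_false, iff_false]; omega
    rw [h1, Set.ncard_empty]; omega


section Main
variable {l : ℕ} {lam : ℕ → ℕ}

lemma lam_zero (hsupp : ∀ i, lam i ≠ 0 ↔ i < l) {i : ℕ} (h : l ≤ i) : lam i = 0 := by
  by_contra h'
  have := (hsupp i).mp h'
  omega

lemma lam_succAbove (hsupp : ∀ i, lam i ≠ 0 ↔ i < l) {M : ℕ} (r : Fin (M+1))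
    (hr : l ≤ (r:ℕ)) (x : Fin M) : lam ((r.succAbove x : Fin (M+1)) : ℕ) = lam (x:ℕ) := by
  rw [succAbove_val]
  split_ifs with h
  · rfl
  · rw [lam_zero hsupp (by omega), lam_zero hsupp (by omega)]

lemma fullRows (hsupp : ∀ i, lam i ≠ 0 ↔ i < l) {M : ℕ} (hlM : l ≤ M)
    (ρ' : Fin M ↪ Fin M)
    (hcount : {j : Fin M | rookInside M M lam ρ' j}.ncard = l) :
    ∀ j : Fin M, (ρ' j : ℕ) < l → (j : ℕ) < lam (ρ' j) := by
  have hsub : {j : Fin M | rookInside M M lam ρ' j} ⊆ {j : Fin M | (ρ' j : ℕ) < l} := by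
    intro j hj
    simp only [Set.mem_setOf_eq, rookInside] at hj ⊢
    exact (hsupp _).mp (by omega)
  have hU : ({j : Fin M | (ρ' j : ℕ) < l}).ncard = l := by
    have : {j : Fin M | (ρ' j : ℕ) < l} = ρ' ⁻¹' {i : Fin M | (i:ℕ) < l} := rfl
    rw [this, ncard_pre, ncard_lt _ _ hlM]
  have heq := Set.eq_of_subset_of_ncard_le hsub (by rw [hcount, hU]) (Set.toFinite _)
  intro j hj
  have : j ∈ {j : Fin M | rookInside M M lam ρ' j} := by rw [heq]; exact hj
  exact this

lemma countEq (hsupp : ∀ i, lam i ≠ 0 ↔ i < l) (hanti : ∀ i j, i ≤ j → lam j ≤ lam i)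
    {M : ℕ} (h1 : lam 0 ≤ M) (r : Fin (M+1)) (hr : l ≤ (r:ℕ)) (ρ' : Fin M ↪ Fin M) :
    {j : Fin (M+1) | rookInside (M+1) (M+1) lam (insEmb M r ρ') j}.ncard
      = {j : Fin M | rookInside M M lam ρ' j}.ncard := by
  have hset : {j : Fin (M+1) | rookInside (M+1) (M+1) lam (insEmb M r ρ') j}
      = Fin.castSucc '' {j : Fin M | rookInside M M lam ρ' j} := by
    ext j
    rcases Fin.eq_castSucc_or_eq_last j with ⟨j0, rfl⟩ | rfl
    · simp only [Set.mem_setOf_eq, Set.mem_image, rookInside, ins_castSucc,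
        Fin.coe_castSucc, lam_succAbove hsupp r hr]
      constructor
      · intro h; exact ⟨j0, h, rfl⟩
      · rintro ⟨j1, h, hj1⟩
        have : j1 = j0 := Fin.castSucc_injective M hj1
        rwa [← this]
    · simp only [Set.mem_setOf_eq, Set.mem_image, rookInside, ins_last, Fin.val_last]
      constructor
      · intro h
        have : lam (r:ℕ) ≤ lam 0 := hanti 0 r (Nat.zero_le _)
        omega
      · rintro ⟨j1, _, hj1⟩
        exact absurd hj1 (Fin.castSucc_lt_last j1).ne
  rw [hset, Set.ncard_image_of_injective _ (Fin.castSucc_injective M)]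

lemma countLt (hsupp : ∀ i, lam i ≠ 0 ↔ i < l) (hanti : ∀ i j, i ≤ j → lam j ≤ lam i)
    {M : ℕ} (hlM : l ≤ M) (h1 : lam 0 ≤ M) (r : Fin (M+1)) (hr : (r:ℕ) < l)
    (ρ' : Fin M ↪ Fin M) :
    {j : Fin (M+1) | rookInside (M+1) (M+1) lam (insEmb M r ρ') j}.ncard ≠ l := by
  set ρ := insEmb M r ρ' with hρ
  set S := {j : Fin (M+1) | rookInside (M+1) (M+1) lam ρ j} with hS
  have him : ρ '' S ⊆ ({i : Fin (M+1) | (i:ℕ) < l} \ {r}) := by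
    rintro _ ⟨j, hj, rfl⟩
    simp only [Set.mem_setOf_eq, rookInside, hS] at hj
    constructor
    · exact (hsupp _).mp (by omega)
    · intro hc
      simp only [Set.mem_singleton_iff] at hc
      have hjl : j = Fin.last M := ρ.injective (by rw [hc, hρ, ins_last])
      rw [hjl, Fin.val_last] at hj
      have : lam (ρ (Fin.last M) : ℕ) ≤ lam 0 := hanti 0 _ (Nat.zero_le _)
      omega
  have h2 : S.ncard ≤ l - 1 := by
    calc S.ncard = (ρ '' S).ncard := (Set.ncard_image_of_injective _ ρ.injective).symm
    _ ≤ ({i : Fin (M+1) | (i:ℕ) < l} \ {r}).ncard := Set.ncard_le_ncard him (Set.toFinite _)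
    _ = l - 1 := by
        rw [Set.ncard_diff_singleton_of_mem (by simpa using hr),
          ncard_lt _ _ (by omega)]
  omega

lemma geom (M l : ℕ) (hlM : l ≤ M) :
    ∑ r : Fin (M+1), (if l ≤ (r:ℕ) then qq^(l+(M-(r:ℕ))) else 0)
      = qq ^ l * qint (M+1-l) := by
  rw [Fin.sum_univ_eq_sum_range (fun k => if l ≤ k then qq^(l+(M-k)) else 0) (M+1),
    ← Finset.sum_filter, qint, Finset.mul_sum]
  refine Finset.sum_nbij' (fun r => M - r) (fun t => M - t) ?_ ?_ ?_ ?_ ?_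
  · intro a ha; simp only [Finset.mem_filter, Finset.mem_range] at ha ⊢; omega
  · intro a ha; simp only [Finset.mem_filter, Finset.mem_range] at ha ⊢; omega
  · intro a ha; simp only [Finset.mem_filter, Finset.mem_range] at ha
    show M - (M - a) = a; omega
  · intro a ha; simp only [Finset.mem_range] at ha
    show M - (M - a) = a; omega
  · intro a ha
    simp only [Finset.mem_filter, Finset.mem_range] at ha
    rw [← pow_add]


lemma unatt_C (hsupp : ∀ i, lam i ≠ 0 ↔ i < l) {M : ℕ} (r : Fin (M+1)) (hr : l ≤ (r:ℕ))
    (ρ' : Fin M ↪ Fin M) (i' j' : Fin M) :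
    Unattacked (M+1) (M+1) lam (insEmb M r ρ') (r.succAbove i') j'.castSucc
      ↔ Unattacked M M lam ρ' i' j' := by
  have hvlt : ∀ x y : Fin M, ((r.succAbove x : Fin (M+1)) : ℕ) < ((r.succAbove y : Fin (M+1)) : ℕ)
      ↔ (x:ℕ) < (y:ℕ) := by
    intro x y; rw [succAbove_val, succAbove_val]; split_ifs <;> omega
  simp only [Unattacked, ins_castSucc, Fin.coe_castSucc, lam_succAbove hsupp r hr]
  constructor
  · rintro ⟨ha, hb, hcc⟩
    refine ⟨fun h => ha (by rw [h]), fun h => hb ((hvlt _ _).mpr h), ?_⟩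
    split_ifs at hcc ⊢ with hc
    · obtain ⟨h1, h2⟩ := hcc
      constructor
      · intro j2 h2' hlt
        exact h1 j2.castSucc (by rw [ins_castSucc, h2']) (Fin.castSucc_lt_castSucc_iff.mpr hlt)
      · intro j2 h2' hlt
        have := h2 j2.castSucc (by rw [ins_castSucc, h2']) (Fin.castSucc_lt_castSucc_iff.mpr hlt)
        rwa [Fin.coe_castSucc] at this
    · intro j2 h2' hlt
      have := hcc j2.castSucc (by rw [ins_castSucc, h2']) (Fin.castSucc_lt_castSucc_iff.mpr hlt)
      rwa [Fin.coe_castSucc] at this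
  · rintro ⟨ha, hb, hcc⟩
    refine ⟨fun h => ha (Fin.succAbove_right_injective h), fun h => hb ((hvlt _ _).mp h), ?_⟩
    split_ifs at hcc ⊢ with hc
    · obtain ⟨h1, h2⟩ := hcc
      constructor
      · intro j2 h2' hlt
        rcases Fin.eq_castSucc_or_eq_last j2 with ⟨j3, rfl⟩ | rfl
        · rw [ins_castSucc] at h2'
          exact h1 j3 (Fin.succAbove_right_injective h2') (Fin.castSucc_lt_castSucc_iff.mp hlt)
        · rw [ins_last] at h2'; exact (Fin.succAbove_ne r i') h2'.symm
      · intro j2 h2' hlt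
        rcases Fin.eq_castSucc_or_eq_last j2 with ⟨j3, rfl⟩ | rfl
        · rw [ins_castSucc] at h2'
          rw [Fin.coe_castSucc]
          exact h2 j3 (Fin.succAbove_right_injective h2') (Fin.castSucc_lt_castSucc_iff.mp hlt)
        · rw [ins_last] at h2'; exact absurd h2'.symm (Fin.succAbove_ne r i')
    · intro j2 h2' hlt
      rcases Fin.eq_castSucc_or_eq_last j2 with ⟨j3, rfl⟩ | rfl
      · rw [ins_castSucc] at h2'
        rw [Fin.coe_castSucc]
        exact hcc j3 (Fin.succAbove_right_injective h2') (Fin.castSucc_lt_castSucc_iff.mp hlt)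
      · rw [ins_last] at h2'; exact absurd h2'.symm (Fin.succAbove_ne r i')

lemma unatt_iff (hsupp : ∀ i, lam i ≠ 0 ↔ i < l) (hanti : ∀ i j, i ≤ j → lam j ≤ lam i)
    {M : ℕ} (hlM : l ≤ M) (h1 : lam 0 ≤ M) (r : Fin (M+1)) (hr : l ≤ (r:ℕ))
    (ρ' : Fin M ↪ Fin M)
    (hfull : ∀ j : Fin M, (ρ' j : ℕ) < l → (j : ℕ) < lam (ρ' j))
    (i j : Fin (M+1)) :
    Unattacked (M+1) (M+1) lam (insEmb M r ρ') i j ↔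
      ((j = Fin.last M ∧ (i:ℕ) < l) ∨
       (∃ j' : Fin M, j = j'.castSucc ∧ i = r ∧ (r:ℕ) ≤ (ρ' j' : ℕ)) ∨
       (∃ i' j' : Fin M, i = r.succAbove i' ∧ j = j'.castSucc ∧
          Unattacked M M lam ρ' i' j')) := by
  have hρsurj : ∀ i0 : Fin (M+1), ∃ j0, insEmb M r ρ' j0 = i0 := fun i0 =>
    (Finite.injective_iff_bijective.mp (insEmb M r ρ').injective).surjective i0
  rcases Fin.eq_castSucc_or_eq_last j with ⟨j', rfl⟩ | rfl
  · -- j = castSucc j'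
    by_cases hi : i = r
    · subst hi
      have hlam0 : lam (i:ℕ) = 0 := lam_zero hsupp hr
      have hnotin : ¬ ((j'.castSucc : ℕ) < lam (i:ℕ)) := by rw [hlam0]; omega
      constructor
      · rintro ⟨ha, hb, hcc⟩
        rw [if_neg hnotin] at hcc
        right; left
        refine ⟨j', rfl, rfl, ?_⟩
        rw [ins_castSucc] at hb
        rw [succAbove_val] at hb
        by_cases hx : (ρ' j' : ℕ) < (i:ℕ)
        · rw [if_pos hx] at hb; omega
        · omega
      · rintro (⟨hlast, -⟩ | ⟨j'', hj'', -, hge⟩ | ⟨i', j'', hi', -, -⟩)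
        · exact absurd hlast (Fin.castSucc_lt_last j').ne
        · have hjj : j' = j'' := Fin.castSucc_injective M hj''
          subst hjj
          refine ⟨by rw [ins_castSucc]; exact Fin.succAbove_ne i _, ?_, ?_⟩
          · rw [ins_castSucc, succAbove_val, if_neg (by omega)]
            omega
          · rw [if_neg hnotin]
            intro j2 h2 hlt2
            rcases Fin.eq_castSucc_or_eq_last j2 with ⟨j3, rfl⟩ | rfl
            · rw [ins_castSucc] at h2; exact absurd h2 (Fin.succAbove_ne i _)
            · rw [Fin.lt_def, Fin.val_last, Fin.coe_castSucc] at hlt2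
              have := j'.isLt; omega
        · exact absurd hi'.symm (Fin.succAbove_ne i i')
    · obtain ⟨i', hi'⟩ := Fin.exists_succAbove_eq (show i ≠ r from hi)
      subst hi'
      rw [unatt_C hsupp r hr ρ' i' j']
      constructor
      · intro h; exact Or.inr (Or.inr ⟨i', j', rfl, rfl, h⟩)
      · rintro (⟨hlast, -⟩ | ⟨j'', -, hi2, -⟩ | ⟨i'', j'', hi2, hj2, hu⟩)
        · exact absurd hlast (Fin.castSucc_lt_last j').ne
        · exact absurd hi2 (Fin.succAbove_ne r i')
        · have hii : i' = i'' := Fin.succAbove_right_injective hi2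
          have hjj : j' = j'' := Fin.castSucc_injective M hj2
          subst hii; subst hjj; exact hu
  · -- j = last
    have hlamlast : ¬ ((Fin.last M : ℕ) < lam (i:ℕ)) := by
      have : lam (i:ℕ) ≤ lam 0 := hanti 0 i (Nat.zero_le _)
      rw [Fin.val_last]; omega
    constructor
    · rintro ⟨ha, hb, hcc⟩
      rw [if_neg hlamlast] at hcc
      rw [ins_last] at ha hb
      left
      refine ⟨rfl, ?_⟩
      by_contra hge
      push_neg at hge
      rcases lt_trichotomy (i:ℕ) (r:ℕ) with h' | h' | h'
      · obtain ⟨j0, hj0⟩ := hρsurj i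
        have hj0ne : j0 ≠ Fin.last M := by
          intro hc2; rw [hc2, ins_last] at hj0
          have := congrArg Fin.val hj0; omega
        have hlt : j0 < Fin.last M := by
          rw [Fin.lt_def, Fin.val_last]
          have h3 := j0.isLt
          have h4 : (j0:ℕ) ≠ M := fun hc2 => hj0ne (Fin.ext (by rw [hc2, Fin.val_last]))
          omega
        have := hcc j0 hj0 hlt
        rw [lam_zero hsupp hge] at this; omega
      · exact ha (Fin.ext h'.symm)
      · exact hb h'
    · rintro (⟨-, hil⟩ | ⟨j'', hj'', -, -⟩ | ⟨i', j'', -, hj'', -⟩)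
      · refine ⟨?_, ?_, ?_⟩
        · rw [ins_last]; intro hc2
          have := congrArg Fin.val hc2; omega
        · rw [ins_last]; omega
        · rw [if_neg hlamlast]
          intro j2 h2 hlt2
          rcases Fin.eq_castSucc_or_eq_last j2 with ⟨j3, rfl⟩ | rfl
          · rw [ins_castSucc] at h2
            have hv := congrArg Fin.val h2
            rw [succAbove_val] at hv
            have hρ'v : (ρ' j3 : ℕ) = (i:ℕ) := by
              by_cases hx : (ρ' j3 : ℕ) < (r:ℕ)
              · rwa [if_pos hx] at hv
              · rw [if_neg hx] at hv; omega
            have hf := hfull j3 (by omega)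
            rw [Fin.coe_castSucc, ← hρ'v]
            exact hf
          · exact absurd hlt2 (lt_irrefl _)
      · exact absurd hj''.symm (Fin.castSucc_lt_last j'').ne
      · exact absurd hj''.symm (Fin.castSucc_lt_last j'').ne


lemma statEq (hsupp : ∀ i, lam i ≠ 0 ↔ i < l) (hanti : ∀ i j, i ≤ j → lam j ≤ lam i)
    {M : ℕ} (hlM : l ≤ M) (h1 : lam 0 ≤ M) (r : Fin (M+1)) (hr : l ≤ (r:ℕ))
    (ρ' : Fin M ↪ Fin M)
    (hfull : ∀ j : Fin M, (ρ' j : ℕ) < l → (j : ℕ) < lam (ρ' j)) :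
    statRook (M+1) (M+1) lam (insEmb M r ρ')
      = l + ((M - (r:ℕ)) + statRook M M lam ρ') := by
  have hset : {p : Fin (M+1) × Fin (M+1) | Unattacked (M+1) (M+1) lam (insEmb M r ρ') p.1 p.2}
      = ((fun i : Fin (M+1) => (i, Fin.last M)) '' {i : Fin (M+1) | (i:ℕ) < l})
        ∪ (((fun j : Fin M => ((r : Fin (M+1)), j.castSucc)) ''
              {j : Fin M | (r:ℕ) ≤ (ρ' j : ℕ)})
          ∪ ((fun p : Fin M × Fin M => (r.succAbove p.1, p.2.castSucc)) ''
              {p : Fin M × Fin M | Unattacked M M lam ρ' p.1 p.2})) := by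
    ext ⟨i, j⟩
    rw [Set.mem_setOf_eq, unatt_iff hsupp hanti hlM h1 r hr ρ' hfull i j]
    simp only [Set.mem_union, Set.mem_image, Set.mem_setOf_eq, Prod.mk.injEq, Prod.exists]
    constructor
    · rintro (⟨rfl, hil⟩ | ⟨j', rfl, rfl, hge⟩ | ⟨i', j', rfl, rfl, hu⟩)
      · exact Or.inl ⟨i, hil, rfl, rfl⟩
      · exact Or.inr (Or.inl ⟨j', hge, rfl, rfl⟩)
      · exact Or.inr (Or.inr ⟨i', j', hu, rfl, rfl⟩)
    · rintro (⟨i0, hil, rfl, rfl⟩ | ⟨j0, hge, rfl, rfl⟩ | ⟨i0, j0, hu, rfl, rfl⟩)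
      · exact Or.inl ⟨rfl, hil⟩
      · exact Or.inr (Or.inl ⟨j0, rfl, rfl, hge⟩)
      · exact Or.inr (Or.inr ⟨i0, j0, rfl, rfl, hu⟩)
  have hdisj1 : Disjoint
      ((fun i : Fin (M+1) => (i, Fin.last M)) '' {i : Fin (M+1) | (i:ℕ) < l})
      ((((fun j : Fin M => ((r : Fin (M+1)), j.castSucc)) ''
            {j : Fin M | (r:ℕ) ≤ (ρ' j : ℕ)})
        ∪ ((fun p : Fin M × Fin M => (r.succAbove p.1, p.2.castSucc)) ''
            {p : Fin M × Fin M | Unattacked M M lam ρ' p.1 p.2}))) := by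
    rw [Set.disjoint_left]
    rintro _ ⟨i0, -, rfl⟩ (⟨j0, -, heq⟩ | ⟨p0, -, heq⟩)
    · exact absurd (congrArg Prod.snd heq) (Fin.castSucc_lt_last j0).ne
    · exact absurd (congrArg Prod.snd heq) (Fin.castSucc_lt_last p0.2).ne
  have hdisj2 : Disjoint
      ((fun j : Fin M => ((r : Fin (M+1)), j.castSucc)) '' {j : Fin M | (r:ℕ) ≤ (ρ' j : ℕ)})
      ((fun p : Fin M × Fin M => (r.succAbove p.1, p.2.castSucc)) ''
          {p : Fin M × Fin M | Unattacked M M lam ρ' p.1 p.2}) := by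
    rw [Set.disjoint_left]
    rintro _ ⟨j0, -, rfl⟩ ⟨p0, -, heq⟩
    exact absurd (congrArg Prod.fst heq) (Fin.succAbove_ne r p0.1)
  rw [statRook, hset,
    Set.ncard_union_eq hdisj1 (Set.toFinite _) (Set.toFinite _),
    Set.ncard_union_eq hdisj2 (Set.toFinite _) (Set.toFinite _),
    Set.ncard_image_of_injective _
      (fun a b h => (Prod.ext_iff.mp h).1 : Function.Injective (fun i : Fin (M+1) => (i, Fin.last M))),
    Set.ncard_image_of_injective _
      (fun a b h => Fin.castSucc_injective M (Prod.ext_iff.mp h).2 :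
        Function.Injective (fun j : Fin M => ((r : Fin (M+1)), j.castSucc))),
    Set.ncard_image_of_injective _
      (fun a b h => Prod.ext (Fin.succAbove_right_injective (Prod.ext_iff.mp h).1)
        (Fin.castSucc_injective M (Prod.ext_iff.mp h).2) :
        Function.Injective (fun p : Fin M × Fin M => (r.succAbove p.1, p.2.castSucc))),
    ncard_lt _ _ (by omega : l ≤ M + 1)]
  congr 1
  congr 1
  show (ρ' ⁻¹' {i : Fin M | (r:ℕ) ≤ (i:ℕ)}).ncard = M - (r:ℕ)
  rw [ncard_pre, ncard_ge]

lemma termEq (hsupp : ∀ i, lam i ≠ 0 ↔ i < l) (hanti : ∀ i j, i ≤ j → lam j ≤ lam i)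
    {M : ℕ} (hlM : l ≤ M) (h1 : lam 0 ≤ M) (r : Fin (M+1)) (ρ' : Fin M ↪ Fin M) :
    (if Set.ncard {j : Fin (M+1) | rookInside (M+1) (M+1) lam (insEmb M r ρ') j} = l
        then qq ^ statRook (M+1) (M+1) lam (insEmb M r ρ') else 0)
      = if l ≤ (r:ℕ) then qq^(l + (M - (r:ℕ))) *
          (if Set.ncard {j : Fin M | rookInside M M lam ρ' j} = l
            then qq ^ statRook M M lam ρ' else 0)
        else 0 := by
  by_cases hr : l ≤ (r:ℕ)
  · rw [if_pos hr, countEq hsupp hanti h1 r hr ρ']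
    by_cases hcnt : Set.ncard {j : Fin M | rookInside M M lam ρ' j} = l
    · rw [if_pos hcnt, if_pos hcnt,
        statEq hsupp hanti hlM h1 r hr ρ' (fullRows hsupp hlM ρ' hcnt),
        pow_add, pow_add, pow_add, mul_assoc]
    · rw [if_neg hcnt, if_neg hcnt, mul_zero]
  · rw [if_neg hr]
    exact if_neg (countLt hsupp hanti hlM h1 r (by omega) ρ')

end Main
end Stmt10Aux

/-- `H_ℓ^N(λ) = q^ℓ · [N-ℓ]_q · H_ℓ^{N-1}(λ)` for `λ` with exactly `ℓ`
nonzero parts and `λ_1 ≤ N-1`. -/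
theorem stmt10 (l N : ℕ) (hN : l + 1 ≤ N) (lam : ℕ → ℕ)
    (hanti : ∀ i j, i ≤ j → lam j ≤ lam i)
    (hsupp : ∀ i, lam i ≠ 0 ↔ i < l)
    (h1 : lam 0 ≤ N - 1) :
    qHit N N lam l = qq ^ l * qint (N - l) * qHit (N - 1) (N - 1) lam l := by
  obtain ⟨M, rfl⟩ : ∃ M, N = M + 1 := ⟨N - 1, by omega⟩
  have hlM : l ≤ M := by omega
  simp only [Nat.add_sub_cancel] at h1 ⊢
  have hsum : qHit (M+1) (M+1) lam l = ∑ p : Fin (M+1) × (Fin M ↪ Fin M),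
      (if Set.ncard {j : Fin (M+1) | rookInside (M+1) (M+1) lam (Stmt10Aux.insEmb M p.1 p.2) j} = l
        then qq ^ statRook (M+1) (M+1) lam (Stmt10Aux.insEmb M p.1 p.2) else 0) :=
    (Fintype.sum_bijective _ (Stmt10Aux.ins_bijective M) _ _ (fun p => rfl)).symm
  rw [hsum, Fintype.sum_prod_type]
  have hinner : ∀ r : Fin (M+1), (∑ ρ' : Fin M ↪ Fin M,
      (if Set.ncard {j : Fin (M+1) | rookInside (M+1) (M+1) lam (Stmt10Aux.insEmb M r ρ') j} = l
        then qq ^ statRook (M+1) (M+1) lam (Stmt10Aux.insEmb M r ρ') else 0))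
      = (if l ≤ (r:ℕ) then qq^(l + (M - (r:ℕ))) else 0) * qHit M M lam l := by
    intro r
    rw [Finset.sum_congr rfl
      (fun ρ' _ => Stmt10Aux.termEq hsupp hanti hlM h1 r ρ')]
    by_cases hr : l ≤ (r:ℕ)
    · simp only [if_pos hr, ← Finset.mul_sum]
      rw [qHit]
    · simp [hr]
  rw [Finset.sum_congr rfl (fun r _ => hinner r), ← Finset.sum_mul,
    Stmt10Aux.geom M l hlM]
end
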